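/- arXiv:1704.07784 — 6 statements merged into one kernel-verified Lean document; each statement's English description precedes it below -/
import Mathlib

section
/- For every integer d ≥ 1, every d-regular finite simple graph G on n ≥ 1 vertices, and every real λ > 0, one has (1/n)·log Z^ind_G(λ) ≤ (1/(2d))·log Z^ind_{K_{d,d}}(λ). -/
open Finset
open scoped Classical

variable {V : Type} [Fintype V] [DecidableEq V]

/-- `M` is a matching of `G`: a finite set of edges of `G` that are pairwise vertex-disjoint. -/
def IsMatchingFinset (G : SimpleGraph V) (M : Finset (Sym2 V)) : Prop :=
  (∀ e ∈ M, e ∈ G.edgeSet) ∧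
    ∀ e ∈ M, ∀ f ∈ M, e ≠ f → ∀ v : V, v ∈ e → v ∉ f

/-- `I` is an independent set of `G`: a finite set of pairwise non-adjacent vertices. -/
def IsIndepFinset (G : SimpleGraph V) (I : Finset V) : Prop :=
  ∀ u ∈ I, ∀ v ∈ I, ¬ G.Adj u v

/-- `G` is `d`-regular: every vertex has exactly `d` neighbors. -/
def IsRegularGraph (G : SimpleGraph V) (d : ℕ) : Prop :=
  ∀ v : V, (Finset.univ.filter fun w => G.Adj v w).card = d

/-- The matching polynomial (monomer-dimer partition function) of `G` at fugacity `lam`. -/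
noncomputable def Zmatch (G : SimpleGraph V) (lam : ℝ) : ℝ :=
  ∑ M ∈ Finset.univ.filter (fun M : Finset (Sym2 V) => IsMatchingFinset G M), lam ^ M.card

/-- The independence polynomial (hard-core partition function) of `G` at fugacity `lam`. -/
noncomputable def Zind (G : SimpleGraph V) (lam : ℝ) : ℝ :=
  ∑ I ∈ Finset.univ.filter (fun I : Finset V => IsIndepFinset G I), lam ^ I.card

/-- `m_k(G)`: the number of matchings of size `k` in `G`. -/
noncomputable def matchCount (G : SimpleGraph V) (k : ℕ) : ℕ :=
  (Finset.univ.filter fun M : Finset (Sym2 V) => IsMatchingFinset G M ∧ M.card = k).card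

/-- `i_k(G)`: the number of independent sets of size `k` in `G`. -/
noncomputable def indepCount (G : SimpleGraph V) (k : ℕ) : ℕ :=
  (Finset.univ.filter fun I : Finset V => IsIndepFinset G I ∧ I.card = k).card

/-- The number of monochromatic edges of `G` under the coloring `χ`. -/
noncomputable def monoCount (G : SimpleGraph V) {q : ℕ} (χ : V → Fin q) : ℕ :=
  (Finset.univ.filter fun e : Sym2 V =>
    e ∈ G.edgeSet ∧ ∀ v ∈ e, ∀ w ∈ e, χ v = χ w).card

/-- `c^q_k(G)`: the number of `q`-colorings of `G` with exactly `k` monochromatic edges. -/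
noncomputable def colCount (G : SimpleGraph V) (q k : ℕ) : ℕ :=
  (Finset.univ.filter fun χ : V → Fin q => monoCount G χ = k).card

/-- The disjoint union of `m` copies of the graph `H`. -/
def copies (m : ℕ) {W : Type} (H : SimpleGraph W) : SimpleGraph (Fin m × W) where
  Adj a b := a.1 = b.1 ∧ H.Adj a.2 b.2
  symm := ⟨fun a b h => ⟨h.1.symm, h.2.symm⟩⟩
  loopless := ⟨fun a h => H.loopless.irrefl a.2 h.2⟩

/-- `H_{d,n}` for `n = 2dm`: the disjoint union of `m` copies of `K_{d,d}`. -/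
def Hgraph (d m : ℕ) : SimpleGraph (Fin m × (Fin d ⊕ Fin d)) :=
  copies m (completeBipartiteGraph (Fin d) (Fin d))



open Finset
open scoped Classical

section Aux

lemma sum_powerset_pow {α : Type*} [DecidableEq α] (lam : ℝ) (s : Finset α) :
    ∑ T ∈ s.powerset, lam ^ T.card = (1 + lam) ^ s.card := by
  have h := Finset.prod_add (fun _ : α => lam) (fun _ => (1 : ℝ)) s
  simp only [Finset.prod_const, Finset.prod_const_one, one_pow, mul_one] at h
  rw [add_comm lam 1] at h
  exact h.symm

lemma geom_superadd {ι : Type*} (s : Finset ι) (hs : s.Nonempty) (x y : ι → ℝ)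
    (hx : ∀ i ∈ s, 0 ≤ x i) (hy : ∀ i ∈ s, 0 ≤ y i) :
    (∏ i ∈ s, x i) ^ ((s.card : ℝ)⁻¹) + (∏ i ∈ s, y i) ^ ((s.card : ℝ)⁻¹)
      ≤ (∏ i ∈ s, (x i + y i)) ^ ((s.card : ℝ)⁻¹) := by
  have hn0 : ((s.card : ℝ)) ≠ 0 := Nat.cast_ne_zero.mpr hs.card_pos.ne'
  by_cases hz : ∀ i ∈ s, 0 < x i + y i
  · have hwsum : ∑ _i ∈ s, ((s.card : ℝ))⁻¹ = 1 := by
      rw [Finset.sum_const, nsmul_eq_mul]; field_simp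
    have main : ∀ z : ι → ℝ, (∀ i ∈ s, 0 ≤ z i) →
        (∏ i ∈ s, z i) ^ ((s.card : ℝ))⁻¹ ≤
          (∑ i ∈ s, ((s.card : ℝ))⁻¹ * (z i / (x i + y i))) *
            (∏ i ∈ s, (x i + y i)) ^ ((s.card : ℝ))⁻¹ := by
      intro z hz0
      have h1 : (∏ i ∈ s, z i) ^ ((s.card : ℝ))⁻¹ = ∏ i ∈ s, (z i) ^ ((s.card : ℝ))⁻¹ :=
        (Real.finset_prod_rpow s z hz0 _).symm
      have h2 : ∀ i ∈ s, (z i) ^ ((s.card : ℝ))⁻¹ =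
          (z i / (x i + y i)) ^ ((s.card : ℝ))⁻¹ * ((x i + y i)) ^ ((s.card : ℝ))⁻¹ := by
        intro i hi
        rw [← Real.mul_rpow (div_nonneg (hz0 i hi) (hz i hi).le) (hz i hi).le,
          div_mul_cancel₀ _ (hz i hi).ne']
      rw [h1, Finset.prod_congr rfl h2, Finset.prod_mul_distrib]
      have h3 : ∏ i ∈ s, (z i / (x i + y i)) ^ ((s.card : ℝ))⁻¹ ≤
          ∑ i ∈ s, ((s.card : ℝ))⁻¹ * (z i / (x i + y i)) :=
        Real.geom_mean_le_arith_mean_weighted s _ _ (fun i _ => by positivity) hwsum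
          (fun i hi => div_nonneg (hz0 i hi) (hz i hi).le)
      have h4 : (0:ℝ) ≤ ∏ i ∈ s, ((x i + y i)) ^ ((s.card : ℝ))⁻¹ :=
        Finset.prod_nonneg fun i hi => Real.rpow_nonneg (hz i hi).le _
      calc (∏ i ∈ s, (z i / (x i + y i)) ^ ((s.card : ℝ))⁻¹) * ∏ i ∈ s, ((x i + y i)) ^ ((s.card : ℝ))⁻¹
          ≤ (∑ i ∈ s, ((s.card : ℝ))⁻¹ * (z i / (x i + y i))) * ∏ i ∈ s, ((x i + y i)) ^ ((s.card : ℝ))⁻¹ :=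
            mul_le_mul_of_nonneg_right h3 h4
        _ = (∑ i ∈ s, ((s.card : ℝ))⁻¹ * (z i / (x i + y i))) * (∏ i ∈ s, (x i + y i)) ^ ((s.card : ℝ))⁻¹ := by
            rw [Real.finset_prod_rpow s _ (fun i hi => (hz i hi).le) _]
    have hxm := main x hx
    have hym := main y hy
    have hsum : (∑ i ∈ s, ((s.card : ℝ))⁻¹ * (x i / (x i + y i))) +
        (∑ i ∈ s, ((s.card : ℝ))⁻¹ * (y i / (x i + y i))) = 1 := by
      rw [← Finset.sum_add_distrib, ← hwsum]
      apply Finset.sum_congr rfl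
      intro i hi
      rw [← mul_add, ← add_div, div_self (hz i hi).ne', mul_one]
    have h5 : (0:ℝ) ≤ (∏ i ∈ s, (x i + y i)) ^ ((s.card : ℝ))⁻¹ :=
      Real.rpow_nonneg (Finset.prod_nonneg fun i hi => (hz i hi).le) _
    calc (∏ i ∈ s, x i) ^ ((s.card : ℝ))⁻¹ + (∏ i ∈ s, y i) ^ ((s.card : ℝ))⁻¹
        ≤ ((∑ i ∈ s, ((s.card : ℝ))⁻¹ * (x i / (x i + y i))) +
            (∑ i ∈ s, ((s.card : ℝ))⁻¹ * (y i / (x i + y i)))) *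
            (∏ i ∈ s, (x i + y i)) ^ ((s.card : ℝ))⁻¹ := by
          rw [add_mul]; exact add_le_add hxm hym
      _ = (∏ i ∈ s, (x i + y i)) ^ ((s.card : ℝ))⁻¹ := by rw [hsum, one_mul]
  · push_neg at hz
    obtain ⟨i, hi, hle⟩ := hz
    have hxi : x i = 0 := le_antisymm (by linarith [hy i hi]) (hx i hi)
    have hyi : y i = 0 := le_antisymm (by linarith [hx i hi]) (hy i hi)
    rw [Finset.prod_eq_zero hi hxi, Finset.prod_eq_zero hi hyi,
      Real.zero_rpow (inv_ne_zero hn0), add_zero]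
    exact Real.rpow_nonneg
      (Finset.prod_nonneg fun j hj => add_nonneg (hx j hj) (hy j hj)) _

lemma prod_add_prod_le_rpow {ι : Type*} (s : Finset ι) (hs : s.Nonempty) (u v : ι → ℝ)
    (hu : ∀ i ∈ s, 0 ≤ u i) (hv : ∀ i ∈ s, 0 ≤ v i) :
    (∏ i ∈ s, u i) + (∏ i ∈ s, v i)
      ≤ ∏ i ∈ s, (u i ^ s.card + v i ^ s.card) ^ ((s.card : ℝ)⁻¹) := by
  have hn0 : s.card ≠ 0 := hs.card_pos.ne'
  have h := geom_superadd s hs (fun i => u i ^ s.card) (fun i => v i ^ s.card)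
    (fun i hi => pow_nonneg (hu i hi) _) (fun i hi => pow_nonneg (hv i hi) _)
  rw [Finset.prod_pow, Finset.prod_pow, Real.pow_rpow_inv_natCast (Finset.prod_nonneg hu) hn0,
    Real.pow_rpow_inv_natCast (Finset.prod_nonneg hv) hn0,
    ← Real.finset_prod_rpow s _ (fun i hi => add_nonneg (pow_nonneg (hu i hi) _) (pow_nonneg (hv i hi) _)) _] at h
  exact h

end Aux

section Finner

variable {V : Type} [Fintype V] [DecidableEq V]

lemma finner {ι : Type} (B : Finset ι) (d : ℕ) (hd : 1 ≤ d)
    (A : Finset V) (N : ι → Finset V) (f : ι → Finset V → ℝ)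
    (hf0 : ∀ b ∈ B, ∀ S, 0 ≤ f b S)
    (hNA : ∀ b ∈ B, N b ⊆ A)
    (hreg : ∀ a ∈ A, (B.filter fun b => a ∈ N b).card = d)
    (hdep : ∀ b ∈ B, ∀ S ⊆ A, f b S = f b (S ∩ N b)) :
    ∑ S ∈ A.powerset, ∏ b ∈ B, f b S ≤
      ∏ b ∈ B, (∑ T ∈ (N b).powerset, f b T ^ d) ^ ((d : ℝ)⁻¹) := by
  have hd0 : d ≠ 0 := by omega
  induction A using Finset.induction_on generalizing N f with
  | empty =>
      rw [Finset.powerset_empty, Finset.sum_singleton]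
      apply le_of_eq
      apply Finset.prod_congr rfl
      intro b hb
      rw [Finset.subset_empty.mp (hNA b hb), Finset.powerset_empty, Finset.sum_singleton,
        Real.pow_rpow_inv_natCast (hf0 b hb ∅) hd0]
  | @insert a A' ha IH =>
      set D := B.filter (fun b => a ∈ N b) with hD
      have hDcard : D.card = d := hreg a (Finset.mem_insert_self a A')
      have hDne : D.Nonempty := Finset.card_pos.mp (by rw [hDcard]; omega)
      have hDB : ∀ b ∈ D, b ∈ B ∧ a ∈ N b := by
        intro b hb
        rw [hD] at hb
        exact ⟨(Finset.mem_filter.mp hb).1, (Finset.mem_filter.mp hb).2⟩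
      set g : ι → Finset V → ℝ := fun b S =>
        if a ∈ N b then (f b S ^ d + f b (insert a S) ^ d) ^ ((d : ℝ)⁻¹) else f b S with hg
      have hg0 : ∀ b ∈ B, ∀ S, 0 ≤ g b S := by
        intro b hb S
        simp only [hg]
        by_cases h : a ∈ N b
        · rw [if_pos h]
          exact Real.rpow_nonneg
            (add_nonneg (pow_nonneg (hf0 b hb S) d) (pow_nonneg (hf0 b hb _) d)) _
        · rw [if_neg h]; exact hf0 b hb S
      have step1 : ∑ S ∈ (insert a A').powerset, ∏ b ∈ B, f b S
          = ∑ S ∈ A'.powerset, (∏ b ∈ B, f b S + ∏ b ∈ B, f b (insert a S)) := by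
        rw [Finset.sum_powerset_insert ha, ← Finset.sum_add_distrib]
      have step2 : ∀ S ∈ A'.powerset, ∏ b ∈ B, f b S + ∏ b ∈ B, f b (insert a S)
          ≤ ∏ b ∈ B, g b S := by
        intro S hSmem
        have hS : S ⊆ A' := Finset.mem_powerset.mp hSmem
        have hSA : S ⊆ insert a A' := hS.trans (Finset.subset_insert a A')
        have hiSA : insert a S ⊆ insert a A' := Finset.insert_subset_insert a hS
        have hnot : ∀ b ∈ B.filter (fun b => ¬ a ∈ N b), f b (insert a S) = f b S := by
          intro b hb
          obtain ⟨hbB, hbN⟩ := Finset.mem_filter.mp hb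
          rw [hdep b hbB (insert a S) hiSA, hdep b hbB S hSA]
          congr 1
          ext x
          simp only [Finset.mem_inter, Finset.mem_insert]
          constructor
          · rintro ⟨hx1 | hx1, hx2⟩
            · exact absurd (hx1 ▸ hx2) hbN
            · exact ⟨hx1, hx2⟩
          · rintro ⟨hx1, hx2⟩; exact ⟨Or.inr hx1, hx2⟩
        rw [← Finset.prod_filter_mul_prod_filter_not B (fun b => a ∈ N b) (fun b => f b S),
          ← Finset.prod_filter_mul_prod_filter_not B (fun b => a ∈ N b) (fun b => f b (insert a S)),
          ← Finset.prod_filter_mul_prod_filter_not B (fun b => a ∈ N b) (fun b => g b S),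
          Finset.prod_congr rfl hnot]
        have hCg : ∏ b ∈ B.filter (fun b => ¬ a ∈ N b), g b S
            = ∏ b ∈ B.filter (fun b => ¬ a ∈ N b), f b S := by
          apply Finset.prod_congr rfl
          intro b hb
          simp only [hg]
          rw [if_neg (Finset.mem_filter.mp hb).2]
        rw [hCg, ← add_mul]
        apply mul_le_mul_of_nonneg_right _
          (Finset.prod_nonneg fun b hb => hf0 b (Finset.mem_filter.mp hb).1 S)
        have hkey := prod_add_prod_le_rpow D hDne (fun b => f b S) (fun b => f b (insert a S))
          (fun b hb => hf0 b (hDB b hb).1 S)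
          (fun b hb => hf0 b (hDB b hb).1 _)
        rw [hDcard] at hkey
        refine hkey.trans (le_of_eq (Finset.prod_congr rfl ?_))
        intro b hb
        simp only [hg]
        rw [if_pos (hDB b hb).2]
      have step3 : ∑ S ∈ A'.powerset, ∏ b ∈ B, g b S ≤
          ∏ b ∈ B, (∑ T ∈ ((N b).erase a).powerset, g b T ^ d) ^ ((d : ℝ)⁻¹) := by
        apply IH (fun b => (N b).erase a) g hg0
        · intro b hb x hx
          obtain ⟨hxa, hxN⟩ := Finset.mem_erase.mp hx
          rcases Finset.mem_insert.mp (hNA b hb hxN) with h | h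
          · exact absurd h hxa
          · exact h
        · intro a' ha'
          have hne : a' ≠ a := fun h => ha (h ▸ ha')
          rw [show (B.filter fun b => a' ∈ (N b).erase a) = B.filter (fun b => a' ∈ N b) from
            Finset.filter_congr fun b _ => by simp [Finset.mem_erase, hne]]
          exact hreg a' (Finset.mem_insert_of_mem ha')
        · intro b hb S hSsub
          have haS : a ∉ S := fun h => ha (hSsub h)
          have hSA : S ⊆ insert a A' := hSsub.trans (Finset.subset_insert a A')
          simp only [hg]
          by_cases hab : a ∈ N b
          · rw [if_pos hab, if_pos hab]
            have hSint : S ∩ (N b).erase a = S ∩ N b := by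
              ext x
              simp only [Finset.mem_inter, Finset.mem_erase]
              constructor
              · rintro ⟨hx1, _, hx2⟩; exact ⟨hx1, hx2⟩
              · rintro ⟨hx1, hx2⟩; exact ⟨hx1, fun h => haS (h ▸ hx1), hx2⟩
            have e1 : f b S = f b (S ∩ (N b).erase a) := by
              rw [hSint]; exact hdep b hb S hSA
            have e2 : f b (insert a S) = f b (insert a (S ∩ (N b).erase a)) := by
              rw [hSint]
              rw [hdep b hb (insert a S) (Finset.insert_subset_insert a hSsub),
                hdep b hb (insert a (S ∩ N b))
                  (Finset.insert_subset_insert a ((Finset.inter_subset_left).trans hSsub))]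
              congr 1
              ext x
              simp only [Finset.mem_inter, Finset.mem_insert]
              constructor
              · rintro ⟨hx1 | hx1, hx2⟩
                · exact ⟨Or.inl hx1, hx2⟩
                · exact ⟨Or.inr ⟨hx1, hx2⟩, hx2⟩
              · rintro ⟨hx1 | ⟨hx1, _⟩, hx2⟩
                · exact ⟨Or.inl hx1, hx2⟩
                · exact ⟨Or.inr hx1, hx2⟩
            rw [← e1, ← e2]
          · rw [if_neg hab, if_neg hab, Finset.erase_eq_of_notMem hab]
            exact hdep b hb S hSA
      have step4 : ∀ b ∈ B, ∑ T ∈ ((N b).erase a).powerset, g b T ^ d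
          = ∑ T ∈ (N b).powerset, f b T ^ d := by
        intro b hb
        by_cases hab : a ∈ N b
        · have h1 : ∀ T ∈ ((N b).erase a).powerset, g b T ^ d = f b T ^ d + f b (insert a T) ^ d := by
            intro T _
            simp only [hg]
            rw [if_pos hab]
            exact Real.rpow_inv_natCast_pow
              (add_nonneg (pow_nonneg (hf0 b hb T) d) (pow_nonneg (hf0 b hb _) d)) hd0
          rw [Finset.sum_congr rfl h1, Finset.sum_add_distrib,
            ← Finset.sum_powerset_insert (Finset.notMem_erase a (N b)),
            Finset.insert_erase hab]
        · rw [Finset.erase_eq_of_notMem hab]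
          apply Finset.sum_congr rfl
          intro T _
          simp only [hg]
          rw [if_neg hab]
      calc ∑ S ∈ (insert a A').powerset, ∏ b ∈ B, f b S
          = ∑ S ∈ A'.powerset, (∏ b ∈ B, f b S + ∏ b ∈ B, f b (insert a S)) := step1
        _ ≤ ∑ S ∈ A'.powerset, ∏ b ∈ B, g b S := Finset.sum_le_sum step2
        _ ≤ ∏ b ∈ B, (∑ T ∈ ((N b).erase a).powerset, g b T ^ d) ^ ((d : ℝ)⁻¹) := step3
        _ = ∏ b ∈ B, (∑ T ∈ (N b).powerset, f b T ^ d) ^ ((d : ℝ)⁻¹) :=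
            Finset.prod_congr rfl fun b hb => by rw [step4 b hb]

end Finner

section Zhao

variable {V : Type} [Fintype V] [DecidableEq V]

def reachS (G : SimpleGraph V) (S : Finset V) : V → V → Prop :=
  Relation.ReflTransGen (fun u v => u ∈ S ∧ v ∈ S ∧ G.Adj u v)

lemma reachS_symm (G : SimpleGraph V) (S : Finset V) : Symmetric (reachS G S) :=
  by
    haveI : Std.Symm (fun u v : V => u ∈ S ∧ v ∈ S ∧ G.Adj u v) := ⟨fun _ _ h => ⟨h.2.1, h.1, h.2.2.symm⟩⟩
    exact fun a b hab => (Relation.ReflTransGen.symmetric (r := fun u v : V => u ∈ S ∧ v ∈ S ∧ G.Adj u v)).symm a b hab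

lemma reachS_mem {G : SimpleGraph V} {S : Finset V} {u v : V}
    (h : reachS G S u v) (hu : u ∈ S) : v ∈ S := by
  induction h with
  | refl => exact hu
  | tail _ hbc _ => exact hbc.2.1

noncomputable def repr0 (G : SimpleGraph V) (S : Finset V) (v : V) : V :=
  if h : ∃ x, x ∈ S.filter (reachS G S v) then h.choose else v

lemma repr0_mem (G : SimpleGraph V) {S : Finset V} {v : V} (hv : v ∈ S) :
    repr0 G S v ∈ S ∧ reachS G S v (repr0 G S v) := by
  have hne : ∃ x, x ∈ S.filter (reachS G S v) :=
    ⟨v, Finset.mem_filter.mpr ⟨hv, Relation.ReflTransGen.refl⟩⟩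
  rw [repr0, dif_pos hne]
  have hs := hne.choose_spec
  rw [Finset.mem_filter] at hs
  exact hs

lemma repr0_congr (G : SimpleGraph V) {S : Finset V} {v w : V}
    (h : reachS G S v w) : repr0 G S v = repr0 G S w := by
  by_cases hv : v ∈ S
  · have hset : S.filter (reachS G S v) = S.filter (reachS G S w) := by
      apply Finset.filter_congr
      intro x _
      constructor
      · intro hvx
        exact Relation.ReflTransGen.trans (reachS_symm G S h) hvx
      · intro hwx
        exact Relation.ReflTransGen.trans h hwx
    have hne : ∃ x, x ∈ S.filter (reachS G S w) :=
      ⟨w, Finset.mem_filter.mpr ⟨reachS_mem h hv, Relation.ReflTransGen.refl⟩⟩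
    rw [repr0, repr0, hset, dif_pos hne, dif_pos hne]
  · obtain rfl : v = w := by
      rcases Relation.ReflTransGen.cases_head h with h1 | ⟨c, hc, _⟩
      · exact h1
      · exact absurd hc.1 hv
    rfl

noncomputable def zhA (G : SimpleGraph V) (I J : Finset V) : Finset V :=
  (I ∩ J) ∪ (symmDiff I J).filter (fun v => repr0 G (symmDiff I J) v ∈ I)

noncomputable def zhB (G : SimpleGraph V) (I J : Finset V) : Finset V :=
  (I ∩ J) ∪ (symmDiff I J).filter (fun v => repr0 G (symmDiff I J) v ∈ J)

lemma disj_inter_symmDiff (I J : Finset V) : Disjoint (I ∩ J) (symmDiff I J) := by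
  rw [Finset.disjoint_left]
  intro a ha hs
  obtain ⟨haI, haJ⟩ := Finset.mem_inter.mp ha
  rcases Finset.mem_symmDiff.mp hs with ⟨_, h2⟩ | ⟨_, h2⟩
  · exact h2 haJ
  · exact h2 haI

lemma zh_card (G : SimpleGraph V) (I J : Finset V) :
    (zhA G I J).card + (zhB G I J).card = I.card + J.card := by
  have hA : (zhA G I J).card = (I ∩ J).card +
      ((symmDiff I J).filter (fun v => repr0 G (symmDiff I J) v ∈ I)).card :=
    Finset.card_union_of_disjoint ((disj_inter_symmDiff I J).mono_right (Finset.filter_subset _ _))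
  have hB : (zhB G I J).card = (I ∩ J).card +
      ((symmDiff I J).filter (fun v => repr0 G (symmDiff I J) v ∈ J)).card :=
    Finset.card_union_of_disjoint ((disj_inter_symmDiff I J).mono_right (Finset.filter_subset _ _))
  have hfil : (symmDiff I J).filter (fun v => repr0 G (symmDiff I J) v ∈ J)
      = (symmDiff I J).filter (fun v => ¬ repr0 G (symmDiff I J) v ∈ I) := by
    apply Finset.filter_congr
    intro v hv
    have hr := (repr0_mem G hv).1
    rcases Finset.mem_symmDiff.mp hr with ⟨h1, h2⟩ | ⟨h1, h2⟩
    · exact iff_of_false h2 (not_not_intro h1)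
    · exact iff_of_true h1 h2
  have hsum := Finset.card_filter_add_card_filter_not
    (s := symmDiff I J) (p := fun v => repr0 G (symmDiff I J) v ∈ I)
  have hIJ : (I ∪ J).card + (I ∩ J).card = I.card + J.card := Finset.card_union_add_card_inter I J
  have hSc : (symmDiff I J).card + (I ∩ J).card = (I ∪ J).card := by
    rw [symmDiff_eq_sup_sdiff_inf, Finset.sup_eq_union, Finset.inf_eq_inter,
      Finset.card_sdiff_of_subset (Finset.inter_subset_union)]
    exact Nat.sub_add_cancel (Finset.card_le_card Finset.inter_subset_union)
  rw [hA, hB, hfil]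
  omega

lemma zh_nocross (G : SimpleGraph V) {I J : Finset V}
    (hI : IsIndepFinset G I) (hJ : IsIndepFinset G J) :
    ∀ u ∈ zhA G I J, ∀ v ∈ zhB G I J, ¬ G.Adj u v := by
  intro u hu v hv hadj
  rw [zhA, Finset.mem_union] at hu
  rw [zhB, Finset.mem_union] at hv
  rcases hu with hu | hu
  · obtain ⟨huI, huJ⟩ := Finset.mem_inter.mp hu
    rcases hv with hv | hv
    · exact hI u huI v (Finset.mem_inter.mp hv).1 hadj
    · have hvS := (Finset.mem_filter.mp hv).1
      rcases Finset.mem_symmDiff.mp hvS with ⟨h1, _⟩ | ⟨h1, _⟩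
      · exact hI u huI v h1 hadj
      · exact hJ u huJ v h1 hadj
  · have huS := (Finset.mem_filter.mp hu).1
    have huI' := (Finset.mem_filter.mp hu).2
    rcases hv with hv | hv
    · obtain ⟨hvI, hvJ⟩ := Finset.mem_inter.mp hv
      rcases Finset.mem_symmDiff.mp huS with ⟨h1, _⟩ | ⟨h1, _⟩
      · exact hI u h1 v hvI hadj
      · exact hJ u h1 v hvJ hadj
    · have hvS := (Finset.mem_filter.mp hv).1
      have hvJ' := (Finset.mem_filter.mp hv).2
      have hreach : reachS G (symmDiff I J) u v := Relation.ReflTransGen.single ⟨huS, hvS, hadj⟩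
      have heq := repr0_congr G hreach
      have hrS : repr0 G (symmDiff I J) v ∈ symmDiff I J := (repr0_mem G hvS).1
      rw [heq] at huI'
      rcases Finset.mem_symmDiff.mp hrS with ⟨_, h2⟩ | ⟨_, h2⟩
      · exact h2 hvJ'
      · exact h2 huI'

lemma zh_inter (G : SimpleGraph V) (I J : Finset V) :
    zhA G I J ∩ zhB G I J = I ∩ J := by
  ext v
  simp only [zhA, zhB, Finset.mem_inter, Finset.mem_union, Finset.mem_filter]
  constructor
  · rintro ⟨hA | ⟨hvS, hrI⟩, hB⟩
    · exact hA
    · rcases hB with hB | ⟨_, hrJ⟩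
      · exact hB
      · have hrS := (repr0_mem G hvS).1
        rcases Finset.mem_symmDiff.mp hrS with ⟨_, h2⟩ | ⟨_, h2⟩
        · exact absurd hrJ h2
        · exact absurd hrI h2
  · intro h
    exact ⟨Or.inl h, Or.inl h⟩

lemma zh_union (G : SimpleGraph V) (I J : Finset V) :
    zhA G I J ∪ zhB G I J = (I ∩ J) ∪ symmDiff I J := by
  ext v
  simp only [zhA, zhB, Finset.mem_union, Finset.mem_filter]
  constructor
  · rintro ((h | ⟨h1, _⟩) | (h | ⟨h1, _⟩))
    · exact Or.inl h
    · exact Or.inr h1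
    · exact Or.inl h
    · exact Or.inr h1
  · rintro (h | h)
    · exact Or.inl (Or.inl h)
    · have hr := (repr0_mem G h).1
      rcases Finset.mem_symmDiff.mp hr with ⟨h1, _⟩ | ⟨h1, _⟩
      · exact Or.inl (Or.inr ⟨h, h1⟩)
      · exact Or.inr (Or.inr ⟨h, h1⟩)

lemma union_sdiff_left' {s t : Finset V} (h : Disjoint s t) : (s ∪ t) \ s = t := by
  ext x
  simp only [Finset.mem_sdiff, Finset.mem_union]
  constructor
  · rintro ⟨h1 | h1, h2⟩
    · exact absurd h1 h2
    · exact h1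
  · intro hx
    exact ⟨Or.inr hx, fun hxs => (Finset.disjoint_left.mp h hxs) hx⟩

lemma zh_sd (G : SimpleGraph V) (I J : Finset V) :
    (zhA G I J ∪ zhB G I J) \ (zhA G I J ∩ zhB G I J) = symmDiff I J := by
  rw [zh_union, zh_inter]
  exact union_sdiff_left' (disj_inter_symmDiff I J)

lemma zh_step (G : SimpleGraph V) {I J S : Finset V}
    (hI : IsIndepFinset G I) (hJ : IsIndepFinset G J) (hS : S = symmDiff I J)
    {b c : V} (hb : b ∈ S) (hc : c ∈ S) (hadj : G.Adj b c) : c ∈ I ↔ ¬ b ∈ I := by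
  subst hS
  rcases Finset.mem_symmDiff.mp hb with ⟨hbI, _⟩ | ⟨hbJ, hbI⟩
  · exact iff_of_false (fun hc' => hI b hbI c hc' hadj) (not_not_intro hbI)
  · have hcJ : ¬ c ∈ J := fun hc' => hJ b hbJ c hc' hadj
    have hcI : c ∈ I := by
      rcases Finset.mem_symmDiff.mp hc with ⟨h, _⟩ | ⟨h, _⟩
      · exact h
      · exact absurd h hcJ
    exact iff_of_true hcI hbI

lemma zh_prop (G : SimpleGraph V) {I J I' J' S : Finset V}
    (hI : IsIndepFinset G I) (hJ : IsIndepFinset G J)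
    (hI' : IsIndepFinset G I') (hJ' : IsIndepFinset G J')
    (hS : S = symmDiff I J) (hS' : S = symmDiff I' J')
    {u w : V} (h : reachS G S u w) (hu : u ∈ I ↔ u ∈ I') : w ∈ I ↔ w ∈ I' := by
  induction h with
  | refl => exact hu
  | tail _ hbc ih =>
      have h1 := zh_step G hI hJ hS hbc.1 hbc.2.1 hbc.2.2
      have h2 := zh_step G hI' hJ' hS' hbc.1 hbc.2.1 hbc.2.2
      rw [h1, h2]
      exact not_congr ih

lemma mem_zhA_iff (G : SimpleGraph V) {I J : Finset V} {v : V} (hv : v ∈ symmDiff I J) :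
    v ∈ zhA G I J ↔ repr0 G (symmDiff I J) v ∈ I := by
  rw [zhA, Finset.mem_union]
  constructor
  · rintro (h | h)
    · exact absurd hv (Finset.disjoint_left.mp (disj_inter_symmDiff I J) h)
    · exact (Finset.mem_filter.mp h).2
  · intro h
    exact Or.inr (Finset.mem_filter.mpr ⟨hv, h⟩)

lemma mem_zhB_iff (G : SimpleGraph V) {I J : Finset V} {v : V} (hv : v ∈ symmDiff I J) :
    v ∈ zhB G I J ↔ repr0 G (symmDiff I J) v ∈ J := by
  rw [zhB, Finset.mem_union]
  constructor
  · rintro (h | h)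
    · exact absurd hv ((Finset.disjoint_left.mp (disj_inter_symmDiff I J) h))
    · exact (Finset.mem_filter.mp h).2
  · intro h
    exact Or.inr (Finset.mem_filter.mpr ⟨hv, h⟩)

lemma zh_inj (G : SimpleGraph V) {I J I' J' : Finset V}
    (hI : IsIndepFinset G I) (hJ : IsIndepFinset G J)
    (hI' : IsIndepFinset G I') (hJ' : IsIndepFinset G J')
    (hA : zhA G I J = zhA G I' J') (hB : zhB G I J = zhB G I' J') :
    I = I' ∧ J = J' := by
  have hT : I ∩ J = I' ∩ J' := by
    rw [← zh_inter G I J, ← zh_inter G I' J', hA, hB]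
  have hS : symmDiff I J = symmDiff I' J' := by
    rw [← zh_sd G I J, ← zh_sd G I' J', hA, hB]
  have key : ∀ v, (v ∈ I ↔ v ∈ I') ∧ (v ∈ J ↔ v ∈ J') := by
    intro v
    by_cases hvT : v ∈ I ∩ J
    · have hvT' : v ∈ I' ∩ J' := hT ▸ hvT
      exact ⟨iff_of_true (Finset.mem_inter.mp hvT).1 (Finset.mem_inter.mp hvT').1,
        iff_of_true (Finset.mem_inter.mp hvT).2 (Finset.mem_inter.mp hvT').2⟩
    by_cases hvS : v ∈ symmDiff I J
    · have hr := repr0_mem G hvS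
      have a1 := mem_zhA_iff G hvS
      have a2 := mem_zhA_iff G (I := I') (J := J') (hS ▸ hvS)
      rw [← hS] at a2
      rw [hA] at a1
      have e1 : repr0 G (symmDiff I J) v ∈ I ↔ repr0 G (symmDiff I J) v ∈ I' :=
        a1.symm.trans a2
      have b1 := mem_zhB_iff G hvS
      have b2 := mem_zhB_iff G (I := I') (J := J') (hS ▸ hvS)
      rw [← hS] at b2
      rw [hB] at b1
      have e2 : repr0 G (symmDiff I J) v ∈ J ↔ repr0 G (symmDiff I J) v ∈ J' :=
        b1.symm.trans b2
      refine ⟨zh_prop G hI hJ hI' hJ' rfl hS (reachS_symm G _ hr.2) e1, ?_⟩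
      exact zh_prop G hJ hI hJ' hI' (symmDiff_comm I J ▸ rfl) (by rw [hS, symmDiff_comm])
        (reachS_symm G _ hr.2) e2
    · have hI1 : v ∉ I := by
        intro h
        by_cases hvJ : v ∈ J
        · exact hvT (Finset.mem_inter.mpr ⟨h, hvJ⟩)
        · exact hvS (Finset.mem_symmDiff.mpr (Or.inl ⟨h, hvJ⟩))
      have hJ1 : v ∉ J := by
        intro h
        by_cases hvI : v ∈ I
        · exact hvT (Finset.mem_inter.mpr ⟨hvI, h⟩)
        · exact hvS (Finset.mem_symmDiff.mpr (Or.inr ⟨h, hvI⟩))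
      have hI2 : v ∉ I' := by
        intro h
        by_cases hvJ : v ∈ J'
        · exact hvT (hT.symm ▸ Finset.mem_inter.mpr ⟨h, hvJ⟩)
        · exact hvS (hS.symm ▸ Finset.mem_symmDiff.mpr (Or.inl ⟨h, hvJ⟩))
      have hJ2 : v ∉ J' := by
        intro h
        by_cases hvI : v ∈ I'
        · exact hvT (hT.symm ▸ Finset.mem_inter.mpr ⟨hvI, h⟩)
        · exact hvS (hS.symm ▸ Finset.mem_symmDiff.mpr (Or.inr ⟨h, hvI⟩))
      exact ⟨iff_of_false hI1 hI2, iff_of_false hJ1 hJ2⟩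
  exact ⟨Finset.ext fun v => (key v).1, Finset.ext fun v => (key v).2⟩

end Zhao

section Apply

variable {V : Type} [Fintype V] [DecidableEq V]

noncomputable def Kdd (d : ℕ) (lam : ℝ) : ℝ := 2 * (1 + lam) ^ d - 1

noncomputable def Z2 (G : SimpleGraph V) (lam : ℝ) : ℝ :=
  ∑ p ∈ Finset.univ.filter (fun p : Finset V × Finset V => ∀ u ∈ p.1, ∀ v ∈ p.2, ¬ G.Adj u v),
    lam ^ p.1.card * lam ^ p.2.card

noncomputable def NdF (G : SimpleGraph V) (v : V) : Finset V := Finset.univ.filter (fun w => G.Adj v w)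

lemma mem_NdF {G : SimpleGraph V} {u v : V} : u ∈ NdF G v ↔ G.Adj v u := by
  rw [NdF]
  simp only [Finset.mem_filter, Finset.mem_univ, true_and]

noncomputable def ff (G : SimpleGraph V) (d : ℕ) (lam : ℝ) (v : V) (S : Finset V) : ℝ :=
  (lam ^ (S ∩ NdF G v).card * (1 + lam) ^ (if S ∩ NdF G v = ∅ then d else 0)) ^ ((d : ℝ)⁻¹)

lemma zind_sq (G : SimpleGraph V) (lam : ℝ) :
    Zind G lam ^ 2 = ∑ p ∈ (Finset.univ.filter fun I : Finset V => IsIndepFinset G I) ×ˢ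
      (Finset.univ.filter fun I : Finset V => IsIndepFinset G I),
      lam ^ p.1.card * lam ^ p.2.card := by
  rw [sq, Zind, Finset.sum_mul_sum]
  exact (Finset.sum_product' _ _ (fun (I J : Finset V) => lam ^ I.card * lam ^ J.card)).symm

lemma zhao (G : SimpleGraph V) {lam : ℝ} (hlam : 0 ≤ lam) :
    Zind G lam ^ 2 ≤ Z2 G lam := by
  rw [zind_sq]
  set PP := (Finset.univ.filter fun I : Finset V => IsIndepFinset G I) ×ˢ
      (Finset.univ.filter fun I : Finset V => IsIndepFinset G I) with hPP
  set φ : Finset V × Finset V → Finset V × Finset V :=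
    fun p => (zhA G p.1 p.2, zhB G p.1 p.2) with hφ
  have hmemP : ∀ p ∈ PP, IsIndepFinset G p.1 ∧ IsIndepFinset G p.2 := by
    intro p hp
    rw [hPP, Finset.mem_product, Finset.mem_filter, Finset.mem_filter] at hp
    exact ⟨hp.1.2, hp.2.2⟩
  have hinj : ∀ p ∈ PP, ∀ q ∈ PP, φ p = φ q → p = q := by
    intro p hp q hq h
    have h1 : zhA G p.1 p.2 = zhA G q.1 q.2 := congrArg Prod.fst h
    have h2 : zhB G p.1 p.2 = zhB G q.1 q.2 := congrArg Prod.snd h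
    obtain ⟨e1, e2⟩ := zh_inj G (hmemP p hp).1 (hmemP p hp).2 (hmemP q hq).1 (hmemP q hq).2 h1 h2
    exact Prod.ext e1 e2
  calc ∑ p ∈ PP, lam ^ p.1.card * lam ^ p.2.card
      = ∑ p ∈ PP, lam ^ (φ p).1.card * lam ^ (φ p).2.card := by
        apply Finset.sum_congr rfl
        intro p _
        rw [← pow_add, ← pow_add]
        exact congrArg (fun k => lam ^ k) (zh_card G p.1 p.2).symm
    _ = ∑ q ∈ PP.image φ, lam ^ q.1.card * lam ^ q.2.card :=
        (Finset.sum_image (f := fun q : Finset V × Finset V => lam ^ q.1.card * lam ^ q.2.card) hinj).symm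
    _ ≤ Z2 G lam := by
        apply Finset.sum_le_sum_of_subset_of_nonneg
        · intro q hq
          obtain ⟨p, hp, rfl⟩ := Finset.mem_image.mp hq
          simp only [Finset.mem_filter, Finset.mem_univ, true_and]
          exact zh_nocross G (hmemP p hp).1 (hmemP p hp).2
        · intro q _ _
          exact mul_nonneg (pow_nonneg hlam _) (pow_nonneg hlam _)

lemma Z2_eq (G : SimpleGraph V) (lam : ℝ) :
    Z2 G lam = ∑ S ∈ (Finset.univ : Finset V).powerset,
      lam ^ S.card * (1 + lam) ^ (Finset.univ.filter (fun v => S ∩ NdF G v = ∅)).card := by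
  have hin : ∀ I : Finset V,
      (∑ J : Finset V, if (∀ u ∈ I, ∀ v ∈ J, ¬ G.Adj u v) then lam ^ I.card * lam ^ J.card else 0)
      = lam ^ I.card * (1 + lam) ^ (Finset.univ.filter (fun v => I ∩ NdF G v = ∅)).card := by
    intro I
    rw [← Finset.sum_filter]
    have hps : Finset.univ.filter (fun J : Finset V => ∀ u ∈ I, ∀ v ∈ J, ¬ G.Adj u v)
        = (Finset.univ.filter (fun v => I ∩ NdF G v = ∅)).powerset := by
      ext J
      simp only [Finset.mem_filter, Finset.mem_univ, true_and, Finset.mem_powerset]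
      constructor
      · intro h v hv
        simp only [Finset.mem_filter, Finset.mem_univ, true_and]
        rw [Finset.eq_empty_iff_forall_notMem]
        intro x hx
        obtain ⟨hx1, hx2⟩ := Finset.mem_inter.mp hx
        exact h x hx1 v hv (mem_NdF.mp hx2).symm
      · intro h u hu v hv hadj
        have hvf := h hv
        rw [Finset.mem_filter] at hvf
        rw [Finset.eq_empty_iff_forall_notMem] at hvf
        exact hvf.2 u (Finset.mem_inter.mpr ⟨hu, mem_NdF.mpr hadj.symm⟩)
    rw [hps, ← Finset.mul_sum, sum_powerset_pow]
  rw [Z2, Finset.sum_filter, Fintype.sum_prod_type, Finset.powerset_univ]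
  simp only [hin]

lemma sum_ff_pow (G : SimpleGraph V) {d : ℕ} (hd : 1 ≤ d) (hreg : IsRegularGraph G d)
    {lam : ℝ} (hlam : 0 ≤ lam) (v : V) :
    ∑ T ∈ (NdF G v).powerset, ff G d lam v T ^ d = Kdd d lam := by
  have hd0 : d ≠ 0 := by omega
  have h1lam : (0:ℝ) ≤ 1 + lam := by linarith
  have h1 : ∀ T ∈ (NdF G v).powerset,
      ff G d lam v T ^ d = lam ^ T.card + (if T = ∅ then (1 + lam) ^ d - 1 else 0) := by
    intro T hT
    have hTN : T ∩ NdF G v = T := Finset.inter_eq_left.mpr (Finset.mem_powerset.mp hT)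
    rw [ff, hTN, Real.rpow_inv_natCast_pow
      (mul_nonneg (pow_nonneg hlam _) (pow_nonneg h1lam _)) hd0]
    by_cases h : T = ∅
    · subst h
      rw [if_pos rfl, if_pos rfl, Finset.card_empty, pow_zero, one_mul]
      ring
    · rw [if_neg h, if_neg h, pow_zero, mul_one, add_zero]
  rw [Finset.sum_congr rfl h1, Finset.sum_add_distrib, sum_powerset_pow,
    Finset.sum_ite_eq' (NdF G v).powerset (∅ : Finset V) (fun _ => (1 + lam) ^ d - 1),
    if_pos (Finset.empty_mem_powerset _)]
  have hc : (NdF G v).card = d := hreg v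
  rw [hc, Kdd]
  ring

lemma Z2_le (G : SimpleGraph V) {d : ℕ} (hd : 1 ≤ d) (hreg : IsRegularGraph G d)
    {lam : ℝ} (hlam : 0 ≤ lam) :
    Z2 G lam ≤ (Kdd d lam ^ ((d : ℝ)⁻¹)) ^ (Fintype.card V) := by
  have hd0 : d ≠ 0 := by omega
  have h1lam : (0:ℝ) ≤ 1 + lam := by linarith
  have hinner0 : ∀ (v : V) (S : Finset V),
      0 ≤ lam ^ (S ∩ NdF G v).card * (1 + lam) ^ (if S ∩ NdF G v = ∅ then d else 0) :=
    fun v S => mul_nonneg (pow_nonneg hlam _) (pow_nonneg h1lam _)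
  have hf0 : ∀ (v : V) (S : Finset V), 0 ≤ ff G d lam v S :=
    fun v S => Real.rpow_nonneg (hinner0 v S) _
  have hcount : ∀ S : Finset V, (∑ v : V, (S ∩ NdF G v).card) = S.card * d := by
    intro S
    have h1 : ∀ v : V, (S ∩ NdF G v).card = ∑ u ∈ S, if u ∈ NdF G v then 1 else 0 := by
      intro v
      rw [← Finset.filter_mem_eq_inter, Finset.card_filter]
    simp only [h1]
    rw [Finset.sum_comm]
    have h2 : ∀ u ∈ S, (∑ v : V, if u ∈ NdF G v then 1 else 0) = d := by
      intro u _
      rw [← Finset.card_filter]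
      have h3 : (Finset.univ.filter fun v => u ∈ NdF G v)
          = Finset.univ.filter (fun v => G.Adj u v) :=
        Finset.filter_congr fun v _ => by rw [mem_NdF]; exact G.adj_comm v u
      rw [h3]
      exact hreg u
    rw [Finset.sum_congr rfl h2, Finset.sum_const, smul_eq_mul]
  have hcnt2 : ∀ S : Finset V, (∑ v : V, if S ∩ NdF G v = ∅ then d else 0)
      = (Finset.univ.filter (fun v => S ∩ NdF G v = ∅)).card * d := by
    intro S
    calc (∑ v : V, if S ∩ NdF G v = ∅ then d else 0)
        = ∑ _v ∈ Finset.univ.filter (fun v => S ∩ NdF G v = ∅), d :=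
          (Finset.sum_filter _ _).symm
      _ = _ := by rw [Finset.sum_const, smul_eq_mul]
  have hprod : ∀ S : Finset V, (∏ v : V, ff G d lam v S)
      = lam ^ S.card * (1 + lam) ^ (Finset.univ.filter (fun v => S ∩ NdF G v = ∅)).card := by
    intro S
    rw [show (∏ v : V, ff G d lam v S) = ∏ v : V,
      (lam ^ (S ∩ NdF G v).card * (1 + lam) ^ (if S ∩ NdF G v = ∅ then d else 0)) ^ ((d : ℝ)⁻¹)
      from rfl]
    rw [Real.finset_prod_rpow Finset.univ _ (fun v _ => hinner0 v S) _]
    rw [Finset.prod_mul_distrib, Finset.prod_pow_eq_pow_sum, Finset.prod_pow_eq_pow_sum,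
      hcount S, hcnt2 S, pow_mul, pow_mul, ← mul_pow,
      Real.pow_rpow_inv_natCast
        (mul_nonneg (pow_nonneg hlam _) (pow_nonneg h1lam _)) hd0]
  have hmain := finner (Finset.univ : Finset V) d hd (Finset.univ : Finset V) (NdF G)
    (ff G d lam) (fun b _ S => hf0 b S) (fun b _ => Finset.subset_univ _)
    (by
      intro a _
      have h3 : (Finset.univ.filter fun b => a ∈ NdF G b)
          = Finset.univ.filter (fun v => G.Adj a v) :=
        Finset.filter_congr fun v _ => by rw [mem_NdF]; exact G.adj_comm v a
      rw [h3]
      exact hreg a)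
    (by
      intro b _ S _
      rw [ff, ff, Finset.inter_assoc, Finset.inter_self])
  calc Z2 G lam = ∑ S ∈ (Finset.univ : Finset V).powerset, ∏ v : V, ff G d lam v S := by
        rw [Z2_eq G lam]
        exact Finset.sum_congr rfl fun S _ => (hprod S).symm
    _ ≤ ∏ v : V, (∑ T ∈ (NdF G v).powerset, ff G d lam v T ^ d) ^ ((d : ℝ)⁻¹) := hmain
    _ = (Kdd d lam ^ ((d : ℝ)⁻¹)) ^ (Fintype.card V) := by
        rw [Finset.prod_congr rfl (fun v _ => by rw [sum_ff_pow G hd hreg hlam v]),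
          Finset.prod_const, Finset.card_univ]

lemma zind_one_le (G : SimpleGraph V) {lam : ℝ} (hlam : 0 ≤ lam) : (1:ℝ) ≤ Zind G lam := by
  have hmem : (∅ : Finset V) ∈ Finset.univ.filter (fun I : Finset V => IsIndepFinset G I) := by
    simp only [Finset.mem_filter, Finset.mem_univ, true_and]
    intro u hu
    exact absurd hu (Finset.notMem_empty u)
  have h := Finset.single_le_sum (f := fun I : Finset V => lam ^ I.card)
    (fun i _ => pow_nonneg hlam _) hmem
  simp only [Finset.card_empty, pow_zero] at h
  rw [Zind]
  exact h

end Apply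

section KddComp

lemma zind_kdd (d : ℕ) (lam : ℝ) :
    Zind (completeBipartiteGraph (Fin d) (Fin d)) lam = Kdd d lam := by
  set L : Finset (Fin d ⊕ Fin d) := Finset.univ.image Sum.inl with hL
  set R : Finset (Fin d ⊕ Fin d) := Finset.univ.image Sum.inr with hR
  have hmemL : ∀ x : Fin d ⊕ Fin d, x ∈ L ↔ x.isLeft := by
    intro x
    rw [hL]
    cases x with
    | inl a => simp
    | inr b => simp
  have hmemR : ∀ x : Fin d ⊕ Fin d, x ∈ R ↔ x.isRight := by
    intro x
    rw [hR]
    cases x with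
    | inl a => simp
    | inr b => simp
  have hfilter : Finset.univ.filter
      (fun I : Finset (Fin d ⊕ Fin d) => IsIndepFinset (completeBipartiteGraph (Fin d) (Fin d)) I)
      = L.powerset ∪ R.powerset := by
    ext I
    simp only [Finset.mem_filter, Finset.mem_univ, true_and, Finset.mem_union,
      Finset.mem_powerset]
    constructor
    · intro h
      by_cases hl : I ⊆ L
      · exact Or.inl hl
      · right
        obtain ⟨u, hu, huL⟩ := Finset.not_subset.mp hl
        intro v hv
        rw [hmemR]
        cases v with
        | inl a =>
            exfalso
            cases u with
            | inl c => exact huL ((hmemL (Sum.inl c)).mpr rfl)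
            | inr c =>
                exact h (Sum.inl a) hv (Sum.inr c) hu (Or.inl ⟨rfl, rfl⟩)
        | inr b => rfl
    · rintro (h | h) u hu v hv hadj
      · have hu' := (hmemL u).mp (h hu)
        have hv' := (hmemL v).mp (h hv)
        rcases hadj with ⟨h1, h2⟩ | ⟨h1, h2⟩
        · rw [Sum.isLeft_iff] at hv'
          obtain ⟨a, rfl⟩ := hv'
          simp at h2
        · rw [Sum.isLeft_iff] at hu'
          obtain ⟨a, rfl⟩ := hu'
          simp at h1
      · have hu' := (hmemR u).mp (h hu)
        have hv' := (hmemR v).mp (h hv)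
        rcases hadj with ⟨h1, h2⟩ | ⟨h1, h2⟩
        · rw [Sum.isRight_iff] at hu'
          obtain ⟨a, rfl⟩ := hu'
          simp at h1
        · rw [Sum.isRight_iff] at hv'
          obtain ⟨a, rfl⟩ := hv'
          simp at h2
  have hinter : L.powerset ∩ R.powerset = {(∅ : Finset (Fin d ⊕ Fin d))} := by
    ext T
    simp only [Finset.mem_inter, Finset.mem_powerset, Finset.mem_singleton]
    constructor
    · rintro ⟨h1, h2⟩
      rw [← Finset.subset_empty]
      intro x hx
      have hxl := (hmemL x).mp (h1 hx)
      have hxr := (hmemR x).mp (h2 hx)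
      cases x with
      | inl a => simp at hxr
      | inr b => simp at hxl
    · rintro rfl
      exact ⟨Finset.empty_subset _, Finset.empty_subset _⟩
  have hLcard : L.card = d := by
    rw [hL, Finset.card_image_of_injective _ Sum.inl_injective, Finset.card_univ,
      Fintype.card_fin]
  have hRcard : R.card = d := by
    rw [hR, Finset.card_image_of_injective _ Sum.inr_injective, Finset.card_univ,
      Fintype.card_fin]
  have hsum := Finset.sum_union_inter (s₁ := L.powerset) (s₂ := R.powerset)
    (f := fun I : Finset (Fin d ⊕ Fin d) => lam ^ I.card)
  rw [hinter, Finset.sum_singleton, Finset.card_empty, pow_zero,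
    sum_powerset_pow, sum_powerset_pow, hLcard, hRcard] at hsum
  rw [Zind, hfilter, Kdd]
  linarith [hsum]

end KddComp

/-- For every `d ≥ 1`, every `d`-regular graph `G` on `n ≥ 1` vertices and
every `λ > 0`, `(1/n) log Z^ind_G(λ) ≤ (1/(2d)) log Z^ind_{K_{d,d}}(λ)`. -/
theorem independence_free_energy_le (d : ℕ) (hd : 1 ≤ d)
    {V : Type} [Fintype V] [DecidableEq V] (G : SimpleGraph V)
    (hn : 1 ≤ Fintype.card V) (hreg : IsRegularGraph G d)
    (lam : ℝ) (hlam : 0 < lam) :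
    (1 / (Fintype.card V : ℝ)) * Real.log (Zind G lam) ≤
      (1 / (2 * (d : ℝ))) *
        Real.log (Zind (completeBipartiteGraph (Fin d) (Fin d)) lam) := by
  have hd0 : d ≠ 0 := by omega
  have hnpos : (0:ℝ) < (Fintype.card V : ℝ) := by exact_mod_cast hn
  have hdpos : (0:ℝ) < (d : ℝ) := by exact_mod_cast hd
  have hZ1 : (1:ℝ) ≤ Zind G lam := zind_one_le G hlam.le
  have hZpos : (0:ℝ) < Zind G lam := lt_of_lt_of_le zero_lt_one hZ1
  have hKpos : (0:ℝ) < Kdd d lam := by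
    have h1 : (1:ℝ) ≤ (1 + lam) ^ d := one_le_pow₀ (by linarith)
    rw [Kdd]; linarith
  have chain : Zind G lam ^ 2 ≤ (Kdd d lam ^ ((d : ℝ)⁻¹)) ^ (Fintype.card V) :=
    le_trans (zhao G hlam.le) (Z2_le G hd hreg hlam.le)
  have hlog := Real.log_le_log (by positivity) chain
  rw [Real.log_pow, Real.log_pow, Real.log_rpow hKpos] at hlog
  -- hlog : 2 * log Zind ≤ n * (d⁻¹ * log K)
  rw [zind_kdd d lam]
  rw [one_div_mul_eq_div, one_div_mul_eq_div, div_le_div_iff₀ hnpos (by positivity)]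
  have h3 := mul_le_mul_of_nonneg_right hlog hdpos.le
  have h4 : ((Fintype.card V : ℝ) * ((d:ℝ)⁻¹ * Real.log (Kdd d lam))) * (d:ℝ)
      = (Fintype.card V : ℝ) * Real.log (Kdd d lam) := by
    field_simp
  rw [h4] at h3
  push_cast at h3
  nlinarith [h3]
end

section
/- For every integer d ≥ 1, every d-regular finite simple graph G on n ≥ 1 vertices, and every real λ > 0, the hard-core occupancy fraction of G is at most that of K_{d,d}; explicitly, (1/n) · (∑_{I ∈ I(G)} |I|·λ^{|I|}) / (∑_{I ∈ I(G)} λ^{|I|}) ≤ (1/(2d)) · (∑_{I ∈ I(K_{d,d})} |I|·λ^{|I|}) / (∑_{I ∈ I(K_{d,d})} λ^{|I|}). -/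
open Finset
open scoped Classical

variable {V : Type} [Fintype V] [DecidableEq V]

/-- `∑_{I ∈ I(G)} |I|·λ^{|I|}`, the numerator of the hard-core occupancy fraction. -/
noncomputable def indEnergy (G : SimpleGraph V) (lam : ℝ) : ℝ :=
  ∑ I ∈ Finset.univ.filter (fun I : Finset V => IsIndepFinset G I),
    (I.card : ℝ) * lam ^ I.card

lemma occ_indep_subset {G : SimpleGraph V} {I J : Finset V} (h : IsIndepFinset G J)
    (hIJ : I ⊆ J) : IsIndepFinset G I := fun u hu w hw => h u (hIJ hu) w (hIJ hw)

lemma occ_indep_empty (G : SimpleGraph V) : IsIndepFinset G (∅ : Finset V) :=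
  fun u hu => absurd hu (Finset.notMem_empty u)

noncomputable def occSS (G : SimpleGraph V) (F : Finset V) : Finset (Finset V) :=
  F.powerset.filter fun S => IsIndepFinset G S

noncomputable def occNN (G : SimpleGraph V) (F : Finset V) (j : ℕ) : ℕ :=
  ((occSS G F).filter fun S => S.card = j).card

lemma occNN_succ (G : SimpleGraph V) (F : Finset V) (j : ℕ) :
    occNN G F (j+1) * (j+1) ≤ occNN G F j * (F.card - j) := by
  classical
  have hL : ((((occSS G F).filter fun S => S.card = j+1)).sigma fun S => (S : Finset V)).card
      = occNN G F (j+1) * (j+1) := by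
    rw [Finset.card_sigma, Finset.sum_congr rfl fun S hS => (Finset.mem_filter.1 hS).2,
      Finset.sum_const, smul_eq_mul, occNN]
  have hR : ((((occSS G F).filter fun S => S.card = j)).sigma fun S => F \ S).card
      = occNN G F j * (F.card - j) := by
    rw [Finset.card_sigma, Finset.sum_congr rfl fun S hS => ?_, Finset.sum_const, smul_eq_mul, occNN]
    have hSF : S ⊆ F := by
      have := (Finset.mem_filter.1 hS).1
      rw [occSS, Finset.mem_filter, Finset.mem_powerset] at this
      exact this.1
    rw [Finset.card_sdiff_of_subset hSF, (Finset.mem_filter.1 hS).2]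
  rw [← hL, ← hR]
  apply Finset.card_le_card_of_injOn
    (fun p : (Σ _ : Finset V, V) => (⟨p.1.erase p.2, p.2⟩ : Σ _ : Finset V, V))
  · rintro ⟨S, u⟩ hp
    dsimp only
    rw [Finset.mem_coe, Finset.mem_sigma] at hp
    obtain ⟨hS, hu⟩ := hp
    rw [Finset.mem_filter] at hS
    obtain ⟨hS', hcard⟩ := hS
    rw [occSS, Finset.mem_filter, Finset.mem_powerset] at hS'
    rw [Finset.mem_coe, Finset.mem_sigma]
    constructor
    · rw [Finset.mem_filter]
      refine ⟨?_, ?_⟩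
      · rw [occSS, Finset.mem_filter, Finset.mem_powerset]
        exact ⟨(Finset.erase_subset _ _).trans hS'.1,
          occ_indep_subset hS'.2 (Finset.erase_subset _ _)⟩
      · rw [Finset.card_erase_of_mem hu, hcard]
        omega
    · rw [Finset.mem_sdiff]
      exact ⟨hS'.1 hu, Finset.notMem_erase _ _⟩
  · rintro ⟨S, u⟩ hp ⟨T, w⟩ hq h
    rw [Finset.mem_coe, Finset.mem_sigma] at hp hq
    dsimp only at h hp hq
    have hsnd : u = w := congrArg Sigma.snd h
    subst hsnd
    have hfst : S.erase u = T.erase u := congrArg Sigma.fst h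
    have hST : S = T := by
      rw [← Finset.insert_erase hp.2, ← Finset.insert_erase hq.2, hfst]
    simp [hST]

lemma occNN_chain (G : SimpleGraph V) (F : Finset V) {d : ℕ} (hF : F.card ≤ d)
    {a i : ℕ} (h : a ≤ i) : d.choose a * occNN G F i ≤ d.choose i * occNN G F a := by
  induction i, h using Nat.le_induction with
  | base => exact le_refl _
  | succ i hai ih =>
    have hdc : occNN G F (i+1) * (i+1) ≤ occNN G F i * (d - i) :=
      (occNN_succ G F i).trans (Nat.mul_le_mul le_rfl (Nat.sub_le_sub_right hF i))
    have h1 : d.choose a * occNN G F (i+1) * (i+1) ≤ d.choose (i+1) * occNN G F a * (i+1) := by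
      calc d.choose a * occNN G F (i+1) * (i+1)
          = d.choose a * (occNN G F (i+1) * (i+1)) := by ring
        _ ≤ d.choose a * (occNN G F i * (d - i)) := Nat.mul_le_mul le_rfl hdc
        _ = d.choose a * occNN G F i * (d - i) := by ring
        _ ≤ d.choose i * occNN G F a * (d - i) := Nat.mul_le_mul ih le_rfl
        _ = d.choose i * (d - i) * occNN G F a := by ring
        _ = d.choose (i+1) * (i+1) * occNN G F a := by rw [← Nat.choose_succ_right_eq]
        _ = d.choose (i+1) * occNN G F a * (i+1) := by ring
    exact Nat.le_of_mul_le_mul_right h1 (Nat.succ_pos i)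
lemma occSS_sum (G : SimpleGraph V) (F : Finset V) {d : ℕ} (hF : F.card ≤ d) (f : ℕ → ℝ) :
    ∑ S ∈ occSS G F, f S.card = ∑ j ∈ Finset.range (d+1), (occNN G F j : ℝ) * f j := by
  classical
  rw [← Finset.sum_fiberwise_of_maps_to (g := fun S : Finset V => S.card)
      (t := Finset.range (d+1)) (fun S hS => ?_) (fun S => f S.card)]
  · refine Finset.sum_congr rfl fun j _ => ?_
    rw [Finset.sum_congr rfl (fun S hS => by rw [(Finset.mem_filter.1 hS).2]),
      Finset.sum_const, occNN, nsmul_eq_mul]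
  · rw [Finset.mem_range, Nat.lt_succ_iff]
    have : S ⊆ F := by
      have := hS; rw [occSS, Finset.mem_filter, Finset.mem_powerset] at this
      exact this.1
    exact (Finset.card_le_card this).trans hF

lemma occNN_zero (G : SimpleGraph V) (F : Finset V) : occNN G F 0 = 1 := by
  classical
  have h : (occSS G F).filter (fun S => S.card = 0) = {(∅ : Finset V)} := by
    ext S
    simp only [Finset.mem_filter, Finset.mem_singleton, Finset.card_eq_zero, occSS,
      Finset.mem_powerset]
    constructor
    · rintro ⟨_, h⟩; exact h
    · rintro rfl; exact ⟨⟨Finset.empty_subset F, occ_indep_empty G⟩, rfl⟩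
  rw [occNN, h, Finset.card_singleton]

lemma occ_sum_choose (d : ℕ) (lam : ℝ) :
    ∑ a ∈ Finset.range (d+1), (d.choose a : ℝ) * lam ^ a = (1+lam) ^ d := by
  rw [add_comm (1:ℝ) lam, add_pow]
  refine Finset.sum_congr rfl fun a _ => ?_
  rw [one_pow, mul_one, mul_comm]

lemma occ_sum_choose' (d : ℕ) (lam : ℝ) :
    ∑ a ∈ Finset.range (d+1), (a : ℝ) * (d.choose a : ℝ) * lam ^ a
      = (d:ℝ) * lam * (1+lam) ^ (d-1) := by
  cases d with
  | zero => simp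
  | succ e =>
    rw [Finset.sum_range_succ']
    have h0 : ((0:ℕ) : ℝ) * ((e+1).choose 0 : ℝ) * lam ^ 0 = 0 := by simp
    rw [h0, add_zero]
    have hstep : ∀ b : ℕ, ((b+1 : ℕ) : ℝ) * ((e+1).choose (b+1) : ℝ) = ((e+1):ℝ) * (e.choose b : ℝ) := by
      intro b
      have h := Nat.add_one_mul_choose_eq e b
      have h2 := congrArg (fun n : ℕ => (n : ℝ)) h
      push_cast at h2 ⊢
      linarith
    calc ∑ b ∈ Finset.range (e+1), ((b+1 : ℕ):ℝ) * ((e+1).choose (b+1):ℝ) * lam ^ (b+1)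
        = ∑ b ∈ Finset.range (e+1), ((e+1):ℝ) * lam * ((e.choose b : ℝ) * lam ^ b) := by
          refine Finset.sum_congr rfl fun b _ => ?_
          rw [hstep b, pow_succ]
          ring
      _ = ((e+1):ℝ) * lam * ∑ b ∈ Finset.range (e+1), (e.choose b:ℝ) * lam ^ b := by
          rw [Finset.mul_sum]
      _ = ((e+1:ℕ):ℝ) * lam * (1+lam) ^ ((e+1) - 1) := by
          rw [occ_sum_choose]
          push_cast
          norm_num

lemma occ_pair (d : ℕ) (M N : ℕ → ℕ) (lam : ℝ) (hlam : 0 ≤ lam)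
    (hchain : ∀ a i, a ≤ i → M a * N i ≤ M i * N a) :
    (∑ a ∈ Finset.Ico 1 (d+1), (M a : ℝ) * lam ^ a) *
        (∑ i ∈ Finset.Ico 1 (d+1), (i : ℝ) * (N i : ℝ) * lam ^ i)
      ≤ (∑ a ∈ Finset.Ico 1 (d+1), (a : ℝ) * (M a : ℝ) * lam ^ a) *
        (∑ i ∈ Finset.Ico 1 (d+1), (N i : ℝ) * lam ^ i) := by
  classical
  set s := Finset.Ico 1 (d+1) with hs
  set f : ℕ → ℕ → ℝ := fun a i => (M a : ℝ) * lam ^ a * ((i : ℝ) * (N i : ℝ) * lam ^ i) with hf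
  set g : ℕ → ℕ → ℝ := fun a i => (a : ℝ) * (M a : ℝ) * lam ^ a * ((N i : ℝ) * lam ^ i) with hg
  have hpt : ∀ a ∈ s, ∀ i ∈ s, f a i + f i a ≤ g a i + g i a := by
    intro a _ i _
    have key : ∀ a i : ℕ, a ≤ i → f a i + f i a ≤ g a i + g i a := by
      intro a i hai
      have hc : ((M a : ℝ)) * (N i : ℝ) ≤ (M i : ℝ) * (N a : ℝ) := by
        exact_mod_cast Nat.cast_le.2 (hchain a i hai)
      have hgeo : (0:ℝ) ≤ lam ^ a * lam ^ i := by positivity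
      have hia' : (0:ℝ) ≤ (i:ℝ) - (a:ℝ) := by
        have : (a:ℝ) ≤ (i:ℝ) := by exact_mod_cast hai
        linarith
      have hint := mul_le_mul_of_nonneg_right (mul_le_mul_of_nonneg_right hc hgeo) hia'
      simp only [hf, hg]
      nlinarith [hint]
    rcases le_total a i with hai | hia
    · exact key a i hai
    · have := key i a hia
      linarith
  have e1 : (∑ a ∈ s, (M a : ℝ) * lam ^ a) * (∑ i ∈ s, (i : ℝ) * (N i : ℝ) * lam ^ i)
      = ∑ a ∈ s, ∑ i ∈ s, f a i := by
    rw [Finset.sum_mul_sum]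
  have e2 : (∑ a ∈ s, (a : ℝ) * (M a : ℝ) * lam ^ a) * (∑ i ∈ s, (N i : ℝ) * lam ^ i)
      = ∑ a ∈ s, ∑ i ∈ s, g a i := by
    rw [Finset.sum_mul_sum]
  rw [e1, e2]
  have hcf : ∑ a ∈ s, ∑ i ∈ s, f a i = ∑ a ∈ s, ∑ i ∈ s, f i a := Finset.sum_comm
  have hcg : ∑ a ∈ s, ∑ i ∈ s, g a i = ∑ a ∈ s, ∑ i ∈ s, g i a := Finset.sum_comm
  have hbig : ∑ a ∈ s, ∑ i ∈ s, (f a i + f i a) ≤ ∑ a ∈ s, ∑ i ∈ s, (g a i + g i a) :=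
    Finset.sum_le_sum fun a ha => Finset.sum_le_sum fun i hi => hpt a ha i hi
  simp only [Finset.sum_add_distrib] at hbig
  linarith

lemma occKI (G : SimpleGraph V) (F : Finset V) {d : ℕ} (hF : F.card ≤ d)
    {lam : ℝ} (hlam : 0 ≤ lam) :
    ((1+lam)^d - 1) * (∑ S ∈ occSS G F, (S.card : ℝ) * lam ^ S.card)
      ≤ (d:ℝ) * lam * (1+lam)^(d-1) * ((∑ S ∈ occSS G F, lam ^ S.card) - 1) := by
  classical
  have hins : Finset.range (d+1) = insert 0 (Finset.Ico 1 (d+1)) := by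
    ext x
    simp only [Finset.mem_range, Finset.mem_insert, Finset.mem_Ico]
    omega
  have h0notin : (0:ℕ) ∉ Finset.Ico 1 (d+1) := by simp
  have hZ : (∑ S ∈ occSS G F, lam ^ S.card)
      = 1 + ∑ j ∈ Finset.Ico 1 (d+1), (occNN G F j : ℝ) * lam ^ j := by
    rw [occSS_sum G F hF (fun j => lam ^ j), hins, Finset.sum_insert h0notin, occNN_zero]
    norm_num
  have hW : (∑ S ∈ occSS G F, (S.card:ℝ) * lam ^ S.card)
      = ∑ j ∈ Finset.Ico 1 (d+1), (j : ℝ) * (occNN G F j : ℝ) * lam ^ j := by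
    rw [show (fun S : Finset V => (S.card:ℝ) * lam ^ S.card)
        = (fun S : Finset V => (fun j : ℕ => (j:ℝ) * lam ^ j) S.card) from rfl]
    rw [occSS_sum G F hF (fun j => (j:ℝ) * lam ^ j), hins, Finset.sum_insert h0notin]
    simp only [Nat.cast_zero, zero_mul, mul_zero, zero_add, pow_zero]
    refine Finset.sum_congr rfl fun j _ => by ring
  have hP : (1+lam)^d = 1 + ∑ a ∈ Finset.Ico 1 (d+1), (d.choose a : ℝ) * lam ^ a := by
    rw [← occ_sum_choose d lam, hins, Finset.sum_insert h0notin]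
    norm_num
  have hP' : (d:ℝ) * lam * (1+lam)^(d-1)
      = ∑ a ∈ Finset.Ico 1 (d+1), (a:ℝ) * (d.choose a : ℝ) * lam ^ a := by
    rw [← occ_sum_choose' d lam, hins, Finset.sum_insert h0notin]
    norm_num
  rw [hZ, hW, hP, hP']
  have := occ_pair d (d.choose) (occNN G F) lam hlam
    (fun a i hai => occNN_chain G F hF hai)
  simp only [add_sub_cancel_left]
  linarith
lemma occLocal (G : SimpleGraph V) {d : ℕ} (hd : 1 ≤ d)
    (hreg : ∀ w : V, (Finset.univ.filter fun u => G.Adj w u).card = d)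
    {lam : ℝ} (hlam : 0 < lam) (v : V) :
    (d:ℝ)*(1+lam)^d * (∑ I ∈ Finset.univ.filter (fun I : Finset V => IsIndepFinset G I),
        (if v ∈ I then lam ^ I.card else 0))
      + ((1+lam)^d - 1) * (∑ I ∈ Finset.univ.filter (fun I : Finset V => IsIndepFinset G I),
        ((I.filter (fun u => G.Adj v u)).card : ℝ) * lam ^ I.card)
      ≤ (d:ℝ) * lam * (1+lam)^(d-1) *
        (∑ I ∈ Finset.univ.filter (fun I : Finset V => IsIndepFinset G I), lam ^ I.card) := by
  classical
  set A : Finset (Finset V) := Finset.univ.filter (fun I : Finset V => IsIndepFinset G I) with hA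
  set nb : Finset V := Finset.univ.filter (fun u => G.Adj v u) with hnb
  set cnb : Finset V := insert v nb with hcnb
  set B : Finset (Finset V) := A.filter (fun J => Disjoint J cnb) with hB
  set φ : Finset V → ℝ := fun I => (d:ℝ)*(1+lam)^d * (if v ∈ I then lam ^ I.card else 0)
      + ((1+lam)^d - 1) * (((I.filter (fun u => G.Adj v u)).card : ℝ) * lam ^ I.card) with hφ
  set ψ : Finset V → ℝ := fun I => (d:ℝ) * lam * (1+lam)^(d-1) * lam ^ I.card with hψ
  suffices h : (∑ I ∈ A, φ I) ≤ (∑ I ∈ A, ψ I) by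
    have e1 : ∑ I ∈ A, φ I = (d:ℝ)*(1+lam)^d * (∑ I ∈ A, (if v ∈ I then lam ^ I.card else 0))
        + ((1+lam)^d - 1) * (∑ I ∈ A, ((I.filter (fun u => G.Adj v u)).card : ℝ) * lam ^ I.card) := by
      rw [Finset.mul_sum, Finset.mul_sum, ← Finset.sum_add_distrib]
    have e2 : ∑ I ∈ A, ψ I = (d:ℝ) * lam * (1+lam)^(d-1) * (∑ I ∈ A, lam ^ I.card) := by
      rw [Finset.mul_sum]
    rw [e1, e2] at h
    exact h
  have hmaps : ∀ I ∈ A, I \ cnb ∈ B := by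
    intro I hI
    rw [hB, Finset.mem_filter]
    refine ⟨?_, Finset.sdiff_disjoint⟩
    rw [hA, Finset.mem_filter] at hI ⊢
    exact ⟨Finset.mem_univ _, occ_indep_subset hI.2 (Finset.sdiff_subset)⟩
  rw [← Finset.sum_fiberwise_of_maps_to hmaps φ, ← Finset.sum_fiberwise_of_maps_to hmaps ψ]
  refine Finset.sum_le_sum fun J hJ => ?_
  -- facts about J
  rw [hB, Finset.mem_filter] at hJ
  obtain ⟨hJA, hdisj⟩ := hJ
  have hJind : IsIndepFinset G J := by
    rw [hA, Finset.mem_filter] at hJA; exact hJA.2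
  have hvJ : v ∉ J := fun h => (Finset.disjoint_left.1 hdisj h) (Finset.mem_insert_self v nb)
  have hJnadj : ∀ w ∈ J, ¬ G.Adj v w := fun w hw hadj =>
    (Finset.disjoint_left.1 hdisj hw)
      (Finset.mem_insert_of_mem (Finset.mem_filter.2 ⟨Finset.mem_univ w, hadj⟩))
  set FJ : Finset V := nb.filter (fun u => ∀ w ∈ J, ¬ G.Adj u w) with hFJ
  have hvnb : v ∉ nb := by
    rw [hnb, Finset.mem_filter]
    rintro ⟨-, h⟩
    exact G.irrefl h
  have hJnb : Disjoint J nb := hdisj.mono_right (Finset.subset_insert _ _)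
  have hFJnb : FJ ⊆ nb := Finset.filter_subset _ _
  have hSfacts : ∀ S ∈ occSS G FJ, S ⊆ FJ ∧ IsIndepFinset G S := by
    intro S hS
    rw [occSS, Finset.mem_filter, Finset.mem_powerset] at hS
    exact hS
  -- fiber description
  have hfiber : A.filter (fun I => I \ cnb = J)
      = insert (insert v J) ((occSS G FJ).image (fun S => J ∪ S)) := by
    ext I
    rw [Finset.mem_filter, Finset.mem_insert, Finset.mem_image]
    constructor
    · rintro ⟨hIA, hkey⟩
      have hIind : IsIndepFinset G I := by
        rw [hA, Finset.mem_filter] at hIA; exact hIA.2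
      have hJI : J ⊆ I := by rw [← hkey]; exact Finset.sdiff_subset
      by_cases hvI : v ∈ I
      · left
        ext x
        rw [Finset.mem_insert]
        constructor
        · intro hx
          by_cases hxv : x = v
          · exact Or.inl hxv
          · right
            rw [← hkey, Finset.mem_sdiff]
            refine ⟨hx, fun hxc => ?_⟩
            rw [hcnb, Finset.mem_insert] at hxc
            rcases hxc with h | h
            · exact hxv h
            · rw [hnb, Finset.mem_filter] at h
              exact hIind v hvI x hx h.2
        · rintro (rfl | hx)
          · exact hvI
          · exact hJI hx
      · right
        refine ⟨I.filter (fun u => u ∈ nb), ?_, ?_⟩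
        · rw [occSS, Finset.mem_filter, Finset.mem_powerset]
          constructor
          · intro u hu
            rw [Finset.mem_filter] at hu
            rw [hFJ, Finset.mem_filter]
            refine ⟨hu.2, fun w hw hadj => ?_⟩
            exact hIind u hu.1 w (hJI hw) hadj
          · exact occ_indep_subset hIind (Finset.filter_subset _ _)
        · ext x
          rw [Finset.mem_union, Finset.mem_filter]
          constructor
          · rintro (hx | ⟨hx, -⟩)
            · exact hJI hx
            · exact hx
          · intro hx
            by_cases hxn : x ∈ nb
            · exact Or.inr ⟨hx, hxn⟩
            · left
              rw [← hkey, Finset.mem_sdiff]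
              refine ⟨hx, fun hxc => ?_⟩
              rw [hcnb, Finset.mem_insert] at hxc
              rcases hxc with rfl | h
              · exact hvI hx
              · exact hxn h
    · rintro (rfl | ⟨S, hS, rfl⟩)
      · constructor
        · rw [hA, Finset.mem_filter]
          refine ⟨Finset.mem_univ _, ?_⟩
          intro u hu w hw hadj
          rw [Finset.mem_insert] at hu hw
          rcases hu with rfl | hu <;> rcases hw with rfl | hw
          · exact G.irrefl hadj
          · exact hJnadj w hw hadj
          · exact hJnadj u hu (G.adj_symm hadj)
          · exact hJind u hu w hw hadj
        · ext x
          rw [Finset.mem_sdiff, Finset.mem_insert]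
          constructor
          · rintro ⟨rfl | hx, hxc⟩
            · exact absurd (Finset.mem_insert_self x nb) hxc
            · exact hx
          · intro hx
            exact ⟨Or.inr hx, fun hxc => Finset.disjoint_left.1 hdisj hx hxc⟩
      · obtain ⟨hSFJ, hSind⟩ := hSfacts S hS
        have hScross : ∀ u ∈ S, ∀ w ∈ J, ¬ G.Adj u w := fun u hu w hw => by
          have := hSFJ hu
          rw [hFJ, Finset.mem_filter] at this
          exact this.2 w hw
        constructor
        · rw [hA, Finset.mem_filter]
          refine ⟨Finset.mem_univ _, ?_⟩
          intro u hu w hw hadj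
          rw [Finset.mem_union] at hu hw
          rcases hu with hu | hu <;> rcases hw with hw | hw
          · exact hJind u hu w hw hadj
          · exact hScross w hw u hu (G.adj_symm hadj)
          · exact hScross u hu w hw hadj
          · exact hSind u hu w hw hadj
        · ext x
          rw [Finset.mem_sdiff, Finset.mem_union]
          constructor
          · rintro ⟨hx | hx, hxc⟩
            · exact hx
            · exact absurd (Finset.mem_insert_of_mem (hFJnb (hSFJ hx))) hxc
          · intro hx
            exact ⟨Or.inl hx, fun hxc => Finset.disjoint_left.1 hdisj hx hxc⟩
  have hJdisjS : ∀ S ∈ occSS G FJ, Disjoint J S := fun S hS =>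
    hJnb.mono_right ((hSfacts S hS).1.trans hFJnb)
  have hnotmem : insert v J ∉ (occSS G FJ).image (fun S => J ∪ S) := by
    rintro h
    rw [Finset.mem_image] at h
    obtain ⟨S, hS, hSeq⟩ := h
    have hv : v ∈ J ∪ S := by rw [hSeq]; exact Finset.mem_insert_self _ _
    rw [Finset.mem_union] at hv
    rcases hv with h | h
    · exact hvJ h
    · exact hvnb (hFJnb ((hSfacts S hS).1 h))
  have hinj : Set.InjOn (fun S => J ∪ S) ↑(occSS G FJ) := by
    intro S hS T hT h
    have h1 : S = (J ∪ S) \ J := (Finset.union_sdiff_cancel_left (hJdisjS S hS)).symm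
    have h2 : T = (J ∪ T) \ J := (Finset.union_sdiff_cancel_left (hJdisjS T hT)).symm
    dsimp only at h
    rw [h1, h2, h]
  -- compute φ and ψ on fiber elements
  have hφins : φ (insert v J) = (d:ℝ)*(1+lam)^d * (lam ^ J.card * lam) := by
    simp only [hφ]
    rw [if_pos (Finset.mem_insert_self v J)]
    have hcard : (insert v J).card = J.card + 1 := Finset.card_insert_of_notMem hvJ
    have hfilt : ((insert v J).filter (fun u => G.Adj v u)) = ∅ := by
      rw [Finset.filter_eq_empty_iff]
      intro x hx
      rw [Finset.mem_insert] at hx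
      rcases hx with rfl | hx
      · exact fun h => G.irrefl h
      · exact hJnadj x hx
    rw [hcard, hfilt, pow_succ]
    norm_num
  have hψins : ψ (insert v J) = (d:ℝ) * lam * (1+lam)^(d-1) * (lam ^ J.card * lam) := by
    simp only [hψ]
    rw [Finset.card_insert_of_notMem hvJ, pow_succ]
  have hφun : ∀ S ∈ occSS G FJ,
      φ (J ∪ S) = ((1+lam)^d - 1) * ((S.card : ℝ) * (lam ^ J.card * lam ^ S.card)) := by
    intro S hS
    obtain ⟨hSFJ, hSind⟩ := hSfacts S hS
    have hvnot : v ∉ J ∪ S := by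
      rw [Finset.mem_union]
      rintro (h | h)
      · exact hvJ h
      · exact hvnb (hFJnb (hSFJ h))
    have hfilt : (J ∪ S).filter (fun u => G.Adj v u) = S := by
      ext u
      rw [Finset.mem_filter, Finset.mem_union]
      constructor
      · rintro ⟨hu | hu, hadj⟩
        · exact absurd hadj (hJnadj u hu)
        · exact hu
      · intro hu
        have : u ∈ nb := hFJnb (hSFJ hu)
        rw [hnb, Finset.mem_filter] at this
        exact ⟨Or.inr hu, this.2⟩
    have hcard : (J ∪ S).card = J.card + S.card := Finset.card_union_of_disjoint (hJdisjS S hS)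
    simp only [hφ]
    rw [if_neg hvnot, hfilt, hcard, pow_add]
    ring
  have hψun : ∀ S ∈ occSS G FJ,
      ψ (J ∪ S) = (d:ℝ) * lam * (1+lam)^(d-1) * (lam ^ J.card * lam ^ S.card) := by
    intro S hS
    simp only [hψ]
    rw [Finset.card_union_of_disjoint (hJdisjS S hS), pow_add]
  -- FJ has at most d elements
  have hFJd : FJ.card ≤ d := by
    have := Finset.card_le_card hFJnb
    rw [hnb] at this
    exact this.trans_eq (hreg v)
  have hKI := occKI G FJ hFJd hlam.le
  set ZF : ℝ := ∑ S ∈ occSS G FJ, lam ^ S.card with hZF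
  set WF : ℝ := ∑ S ∈ occSS G FJ, (S.card : ℝ) * lam ^ S.card with hWF
  have hpow : (1+lam)^(d-1) * (1+lam) = (1+lam)^d := by
    rw [← pow_succ, Nat.sub_add_cancel hd]
  -- fiber sums
  rw [hfiber, Finset.sum_insert hnotmem, Finset.sum_insert hnotmem,
    Finset.sum_image hinj, Finset.sum_image hinj]
  rw [hφins, hψins]
  rw [Finset.sum_congr rfl hφun, Finset.sum_congr rfl hψun]
  have hsumφ : ∑ S ∈ occSS G FJ, ((1+lam)^d - 1) * ((S.card : ℝ) * (lam ^ J.card * lam ^ S.card))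
      = lam ^ J.card * (((1+lam)^d - 1) * WF) := by
    rw [hWF, Finset.mul_sum, Finset.mul_sum]
    refine Finset.sum_congr rfl fun S _ => by ring
  have hsumψ : ∑ S ∈ occSS G FJ, (d:ℝ) * lam * (1+lam)^(d-1) * (lam ^ J.card * lam ^ S.card)
      = lam ^ J.card * ((d:ℝ) * lam * (1+lam)^(d-1) * ZF) := by
    rw [hZF, Finset.mul_sum, Finset.mul_sum]
    refine Finset.sum_congr rfl fun S _ => by ring
  rw [hsumφ, hsumψ]
  have hcore : (d:ℝ)*(1+lam)^d * lam + ((1+lam)^d - 1) * WF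
      ≤ (d:ℝ) * lam * (1+lam)^(d-1) * lam + (d:ℝ) * lam * (1+lam)^(d-1) * ZF := by
    have hstep : (d:ℝ)*(1+lam)^d * lam + (d:ℝ) * lam * (1+lam)^(d-1) * (ZF - 1)
        = (d:ℝ) * lam * (1+lam)^(d-1) * lam + (d:ℝ) * lam * (1+lam)^(d-1) * ZF := by
      rw [← hpow]; ring
    linarith
  have hlJ : (0:ℝ) ≤ lam ^ J.card := by positivity
  calc (d:ℝ)*(1+lam)^d * (lam ^ J.card * lam) + lam ^ J.card * (((1+lam)^d - 1) * WF)
      = lam ^ J.card * ((d:ℝ)*(1+lam)^d * lam + ((1+lam)^d - 1) * WF) := by ring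
    _ ≤ lam ^ J.card * ((d:ℝ) * lam * (1+lam)^(d-1) * lam + (d:ℝ) * lam * (1+lam)^(d-1) * ZF) :=
        mul_le_mul_of_nonneg_left hcore hlJ
    _ = (d:ℝ) * lam * (1+lam)^(d-1) * (lam ^ J.card * lam)
        + lam ^ J.card * ((d:ℝ) * lam * (1+lam)^(d-1) * ZF) := by ring
lemma occ_sum_pow_powerset {α : Type*} [DecidableEq α] (lam : ℝ) (F : Finset α) :
    ∑ S ∈ F.powerset, lam ^ S.card = (1+lam) ^ F.card := by
  classical
  induction F using Finset.induction_on with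
  | empty => simp
  | @insert a F ha ih =>
    rw [Finset.sum_powerset_insert ha]
    have h2 : ∑ S ∈ F.powerset, lam ^ (insert a S).card
        = lam * ∑ S ∈ F.powerset, lam ^ S.card := by
      rw [Finset.mul_sum]
      refine Finset.sum_congr rfl fun S hS => ?_
      rw [Finset.card_insert_of_notMem (fun h => ha (Finset.mem_powerset.1 hS h)), pow_succ]
      ring
    rw [h2, ih, Finset.card_insert_of_notMem ha, pow_succ]
    ring

lemma occ_sum_card_pow_powerset {α : Type*} [DecidableEq α] (lam : ℝ) (F : Finset α) :
    ∑ S ∈ F.powerset, (S.card : ℝ) * lam ^ S.card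
      = (F.card : ℝ) * lam * (1+lam) ^ (F.card - 1) := by
  classical
  induction F using Finset.induction_on with
  | empty => simp
  | @insert a F ha ih =>
    rw [Finset.sum_powerset_insert ha]
    have h2 : ∑ S ∈ F.powerset, ((insert a S).card : ℝ) * lam ^ (insert a S).card
        = lam * (∑ S ∈ F.powerset, (S.card:ℝ) * lam ^ S.card)
          + lam * ∑ S ∈ F.powerset, lam ^ S.card := by
      rw [Finset.mul_sum, Finset.mul_sum, ← Finset.sum_add_distrib]
      refine Finset.sum_congr rfl fun S hS => ?_
      rw [Finset.card_insert_of_notMem (fun h => ha (Finset.mem_powerset.1 hS h))]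
      push_cast
      rw [pow_succ]
      ring
    rw [h2, ih, occ_sum_pow_powerset, Finset.card_insert_of_notMem ha]
    rcases Nat.eq_zero_or_pos F.card with h0 | hpos
    · rw [h0]
      norm_num
    · obtain ⟨m, hm⟩ : ∃ m, F.card = m + 1 := ⟨F.card - 1, (Nat.succ_pred_eq_of_pos hpos).symm⟩
      rw [hm]
      simp only [Nat.add_sub_cancel]
      push_cast
      ring

lemma occ_Kdd_indep (d : ℕ) (I : Finset (Fin d ⊕ Fin d)) :
    IsIndepFinset (completeBipartiteGraph (Fin d) (Fin d)) I ↔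
      I ⊆ Finset.univ.filter (fun x => Sum.isLeft x)
        ∨ I ⊆ Finset.univ.filter (fun x => Sum.isRight x) := by
  constructor
  · intro h
    by_contra hcon
    push_neg at hcon
    obtain ⟨h1, h2⟩ := hcon
    obtain ⟨x, hxI, hx⟩ := Finset.not_subset.1 h1
    obtain ⟨y, hyI, hy⟩ := Finset.not_subset.1 h2
    simp only [Finset.mem_filter, Finset.mem_univ, true_and] at hx hy
    have hxr : x.isRight := by cases x <;> simp_all
    have hyl : y.isLeft := by cases y <;> simp_all
    exact h y hyI x hxI (Or.inl ⟨hyl, hxr⟩)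
  · rintro (h | h) u hu w hw hadj
    · have hu' := (Finset.mem_filter.1 (h hu)).2
      have hw' := (Finset.mem_filter.1 (h hw)).2
      rcases hadj with ⟨-, h2⟩ | ⟨h2, -⟩
      · cases w <;> simp_all
      · cases u <;> simp_all
    · have hu' := (Finset.mem_filter.1 (h hu)).2
      have hw' := (Finset.mem_filter.1 (h hw)).2
      rcases hadj with ⟨h2, -⟩ | ⟨-, h2⟩
      · cases u <;> simp_all
      · cases w <;> simp_all

lemma occ_L_card (d : ℕ) :
    (Finset.univ.filter (fun x : Fin d ⊕ Fin d => Sum.isLeft x)).card = d := by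
  have h : Finset.univ.filter (fun x : Fin d ⊕ Fin d => Sum.isLeft x)
      = Finset.univ.image (Sum.inl : Fin d → Fin d ⊕ Fin d) := by
    ext x
    cases x <;> simp
  rw [h, Finset.card_image_of_injective _ Sum.inl_injective, Finset.card_univ, Fintype.card_fin]

lemma occ_R_card (d : ℕ) :
    (Finset.univ.filter (fun x : Fin d ⊕ Fin d => Sum.isRight x)).card = d := by
  have h : Finset.univ.filter (fun x : Fin d ⊕ Fin d => Sum.isRight x)
      = Finset.univ.image (Sum.inr : Fin d → Fin d ⊕ Fin d) := by
    ext x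
    cases x <;> simp
  rw [h, Finset.card_image_of_injective _ Sum.inr_injective, Finset.card_univ, Fintype.card_fin]

lemma occ_Kdd_split (d : ℕ) :
    Finset.univ.filter (fun I : Finset (Fin d ⊕ Fin d) =>
        IsIndepFinset (completeBipartiteGraph (Fin d) (Fin d)) I)
      = (Finset.univ.filter (fun x : Fin d ⊕ Fin d => Sum.isLeft x)).powerset
        ∪ (Finset.univ.filter (fun x : Fin d ⊕ Fin d => Sum.isRight x)).powerset := by
  ext I
  rw [Finset.mem_filter, Finset.mem_union, Finset.mem_powerset, Finset.mem_powerset]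
  constructor
  · rintro ⟨-, h⟩
    exact (occ_Kdd_indep d I).1 h
  · intro h
    exact ⟨Finset.mem_univ _, (occ_Kdd_indep d I).2 h⟩

lemma occ_Kdd_inter (d : ℕ) :
    (Finset.univ.filter (fun x : Fin d ⊕ Fin d => Sum.isLeft x)).powerset
        ∩ (Finset.univ.filter (fun x : Fin d ⊕ Fin d => Sum.isRight x)).powerset
      = {(∅ : Finset (Fin d ⊕ Fin d))} := by
  ext S
  rw [Finset.mem_inter, Finset.mem_powerset, Finset.mem_powerset, Finset.mem_singleton]
  constructor
  · rintro ⟨h1, h2⟩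
    ext x
    simp only [Finset.notMem_empty, iff_false]
    intro hx
    have hl := (Finset.mem_filter.1 (h1 hx)).2
    have hr := (Finset.mem_filter.1 (h2 hx)).2
    cases x <;> simp_all
  · rintro rfl
    exact ⟨Finset.empty_subset _, Finset.empty_subset _⟩

lemma occ_Zdd (d : ℕ) (lam : ℝ) :
    Zind (completeBipartiteGraph (Fin d) (Fin d)) lam = 2*(1+lam)^d - 1 := by
  classical
  rw [Zind, occ_Kdd_split d]
  have h := Finset.sum_union_inter (s₁ := (Finset.univ.filter (fun x : Fin d ⊕ Fin d => Sum.isLeft x)).powerset)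
    (s₂ := (Finset.univ.filter (fun x : Fin d ⊕ Fin d => Sum.isRight x)).powerset)
    (f := fun I : Finset (Fin d ⊕ Fin d) => lam ^ I.card)
  rw [occ_Kdd_inter d, Finset.sum_singleton, Finset.card_empty, pow_zero,
    occ_sum_pow_powerset, occ_sum_pow_powerset, occ_L_card, occ_R_card] at h
  linarith

lemma occ_Edd (d : ℕ) (lam : ℝ) :
    indEnergy (completeBipartiteGraph (Fin d) (Fin d)) lam
      = 2*(d:ℝ)*lam*(1+lam)^(d-1) := by
  classical
  rw [indEnergy, occ_Kdd_split d]
  have h := Finset.sum_union_inter (s₁ := (Finset.univ.filter (fun x : Fin d ⊕ Fin d => Sum.isLeft x)).powerset)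
    (s₂ := (Finset.univ.filter (fun x : Fin d ⊕ Fin d => Sum.isRight x)).powerset)
    (f := fun I : Finset (Fin d ⊕ Fin d) => (I.card : ℝ) * lam ^ I.card)
  rw [occ_Kdd_inter d, Finset.sum_singleton, Finset.card_empty,
    occ_sum_card_pow_powerset, occ_sum_card_pow_powerset, occ_L_card, occ_R_card] at h
  simp only [Nat.cast_zero, zero_mul, add_zero] at h
  linarith
/-- the hard-core occupancy fraction of a `d`-regular graph `G` on `n ≥ 1`
vertices is at most that of `K_{d,d}`. -/
theorem hardcore_occupancy_fraction_le (d : ℕ) (hd : 1 ≤ d)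
    {V : Type} [Fintype V] [DecidableEq V] (G : SimpleGraph V)
    (hn : 1 ≤ Fintype.card V) (hreg : IsRegularGraph G d)
    (lam : ℝ) (hlam : 0 < lam) :
    (1 / (Fintype.card V : ℝ)) * (indEnergy G lam / Zind G lam) ≤
      (1 / (2 * (d : ℝ))) *
        (indEnergy (completeBipartiteGraph (Fin d) (Fin d)) lam /
          Zind (completeBipartiteGraph (Fin d) (Fin d)) lam) := by
  classical
  have hreg' : ∀ w : V, (Finset.univ.filter fun u => G.Adj w u).card = d := hreg
  have hloc := Finset.sum_le_sum (fun v (_ : v ∈ (Finset.univ : Finset V)) =>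
    occLocal G hd hreg' hlam v)
  have hsum1 : ∑ v : V, (∑ I ∈ Finset.univ.filter (fun I : Finset V => IsIndepFinset G I),
      (if v ∈ I then lam ^ I.card else 0)) = indEnergy G lam := by
    rw [indEnergy, Finset.sum_comm]
    refine Finset.sum_congr rfl fun I _ => ?_
    rw [Finset.sum_ite_mem, Finset.univ_inter, Finset.sum_const, nsmul_eq_mul]
  have hsum2 : ∑ v : V, (∑ I ∈ Finset.univ.filter (fun I : Finset V => IsIndepFinset G I),
      ((I.filter (fun u => G.Adj v u)).card : ℝ) * lam ^ I.card)
      = (d:ℝ) * indEnergy G lam := by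
    rw [Finset.sum_comm, indEnergy, Finset.mul_sum]
    refine Finset.sum_congr rfl fun I _ => ?_
    rw [← Finset.sum_mul]
    have hnat : ∑ v : V, (I.filter (fun u => G.Adj v u)).card = d * I.card := by
      have h1 : ∀ v : V, (I.filter (fun u => G.Adj v u)).card
          = ∑ u ∈ I, if G.Adj v u then 1 else 0 := fun v => Finset.card_filter _ _
      simp only [h1]
      rw [Finset.sum_comm]
      have h2 : ∀ u ∈ I, (∑ v : V, if G.Adj v u then 1 else 0) = d := by
        intro u _
        rw [← Finset.card_filter]
        rw [show (Finset.univ.filter fun v => G.Adj v u)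
            = (Finset.univ.filter fun w => G.Adj u w) from by
          ext w
          simp [G.adj_comm]]
        exact hreg u
      rw [Finset.sum_congr rfl h2, Finset.sum_const, smul_eq_mul, mul_comm]
    have hcast : ∑ v : V, ((I.filter (fun u => G.Adj v u)).card : ℝ)
        = (d : ℝ) * (I.card : ℝ) := by
      rw [← Nat.cast_sum, hnat, Nat.cast_mul]
    rw [hcast]
    ring
  have hrhs : ∑ _v : V, (d:ℝ) * lam * (1+lam)^(d-1) *
      (∑ I ∈ Finset.univ.filter (fun I : Finset V => IsIndepFinset G I), lam ^ I.card)
      = (Fintype.card V : ℝ) * ((d:ℝ) * lam * (1+lam)^(d-1) * Zind G lam) := by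
    rw [Finset.sum_const, Finset.card_univ, nsmul_eq_mul, Zind]
  rw [Finset.sum_add_distrib, ← Finset.mul_sum, ← Finset.mul_sum, hsum1, hsum2, hrhs] at hloc
  set E := indEnergy G lam with hE
  set Z := Zind G lam with hZ
  set n := (Fintype.card V : ℝ) with hncast
  have hd0 : (0:ℝ) < d := by exact_mod_cast Nat.lt_of_lt_of_le Nat.zero_lt_one hd
  have hmain : E * (2*(1+lam)^d - 1) ≤ lam * (1+lam)^(d-1) * (n * Z) := by
    have h2 : (d:ℝ) * (E * (2*(1+lam)^d - 1)) ≤ (d:ℝ) * (lam * (1+lam)^(d-1) * (n * Z)) := by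
      calc (d:ℝ) * (E * (2*(1+lam)^d - 1))
          = (d:ℝ)*(1+lam)^d * E + ((1+lam)^d - 1) * ((d:ℝ) * E) := by ring
        _ ≤ n * ((d:ℝ) * lam * (1+lam)^(d-1) * Z) := hloc
        _ = (d:ℝ) * (lam * (1+lam)^(d-1) * (n * Z)) := by ring
    exact le_of_mul_le_mul_left h2 hd0
  have hZpos : 0 < Z := by
    rw [hZ, Zind]
    apply Finset.sum_pos
    · intro i _
      positivity
    · exact ⟨∅, Finset.mem_filter.2 ⟨Finset.mem_univ _, occ_indep_empty G⟩⟩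
  have hnpos : (0:ℝ) < n := by
    rw [hncast]
    exact_mod_cast Nat.lt_of_lt_of_le Nat.zero_lt_one hn
  have h1lam : (1:ℝ) ≤ (1+lam)^d := one_le_pow₀ (by linarith)
  have hZK : (0:ℝ) < 2*(1+lam)^d - 1 := by linarith
  rw [occ_Zdd, occ_Edd]
  have g1 : (1/n)*(E/Z) = E/(n*Z) := by
    rw [div_mul_div_comm, one_mul]
  have g2 : (1/(2*(d:ℝ)))*((2*(d:ℝ)*lam*(1+lam)^(d-1))/(2*(1+lam)^d-1))
      = (lam*(1+lam)^(d-1))/(2*(1+lam)^d-1) := by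
    rw [div_mul_div_comm, one_mul]
    rw [show 2*(d:ℝ)*lam*(1+lam)^(d-1) = (2*(d:ℝ))*(lam*(1+lam)^(d-1)) from by ring]
    rw [mul_div_mul_left _ _ (by positivity : (2*(d:ℝ)) ≠ 0)]
  rw [g1, g2, div_le_div_iff₀ (by positivity) hZK]
  linarith [hmain]
end

section
/- For every finite simple graph G, every edge e of G, and every real λ ≥ 0, the total weight of matchings containing e is at most λ/(1+λ) times the total weight of all matchings: ∑_{M ∈ M(G), e ∈ M} λ^{|M|} ≤ (λ/(1+λ)) · ∑_{M ∈ M(G)} λ^{|M|}. In particular, in the monomer-dimer model on G at fugacity λ, any given edge belongs to the random matching with probability at most λ/(1+λ). -/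
open Finset
open scoped Classical

variable {V : Type} [Fintype V] [DecidableEq V]

/-- for any graph `G`, edge `e` of `G` and `λ ≥ 0`, the total weight of
matchings containing `e` is at most `λ/(1+λ)` times the total weight of all matchings. -/
theorem edge_occupancy_probability_le
    {V : Type} [Fintype V] [DecidableEq V] (G : SimpleGraph V)
    (e : Sym2 V) (he : e ∈ G.edgeSet) (lam : ℝ) (hlam : 0 ≤ lam) :
    (∑ M ∈ Finset.univ.filter
        (fun M : Finset (Sym2 V) => IsMatchingFinset G M ∧ e ∈ M), lam ^ M.card) ≤
      (lam / (1 + lam)) * Zmatch G lam := by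
  classical
  set A := Finset.univ.filter
      (fun M : Finset (Sym2 V) => IsMatchingFinset G M ∧ e ∈ M) with hA
  set B := Finset.univ.filter
      (fun M : Finset (Sym2 V) => IsMatchingFinset G M ∧ e ∉ M) with hB
  have hsubmatch : ∀ M N : Finset (Sym2 V), N ⊆ M → IsMatchingFinset G M →
      IsMatchingFinset G N := by
    rintro M N hsub ⟨h1, h2⟩
    exact ⟨fun f hf => h1 f (hsub hf),
      fun f hf g hg => h2 f (hsub hf) g (hsub hg)⟩
  have hBnonneg : (0:ℝ) ≤ ∑ M ∈ B, lam ^ M.card :=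
    Finset.sum_nonneg fun M _ => pow_nonneg hlam _
  have hAnonneg : (0:ℝ) ≤ ∑ M ∈ A, lam ^ M.card :=
    Finset.sum_nonneg fun M _ => pow_nonneg hlam _
  -- key inequality : S_A ≤ lam * S_B
  have key : (∑ M ∈ A, lam ^ M.card) ≤ lam * ∑ M ∈ B, lam ^ M.card := by
    have h1 : (∑ M ∈ A, lam ^ M.card)
        = lam * ∑ M ∈ A, lam ^ (M.erase e).card := by
      rw [Finset.mul_sum]
      refine Finset.sum_congr rfl fun M hM => ?_
      rw [hA, Finset.mem_filter] at hM
      rw [← Finset.card_erase_add_one hM.2.2, pow_succ, mul_comm]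
    have hinj : ∀ M ∈ A, ∀ N ∈ A, M.erase e = N.erase e → M = N := by
      intro M hM N hN h
      rw [hA, Finset.mem_filter] at hM hN
      rw [← Finset.insert_erase hM.2.2, ← Finset.insert_erase hN.2.2, h]
    have h2 : (∑ N ∈ A.image (fun M => M.erase e), lam ^ N.card)
        = ∑ M ∈ A, lam ^ (M.erase e).card := by
      rw [Finset.sum_image hinj]
    have h3 : A.image (fun M => M.erase e) ⊆ B := by
      intro N hN
      rcases Finset.mem_image.mp hN with ⟨M, hM, rfl⟩
      rw [hA, Finset.mem_filter] at hM
      rw [hB, Finset.mem_filter]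
      exact ⟨Finset.mem_univ _,
        hsubmatch M _ (Finset.erase_subset _ _) hM.2.1,
        Finset.notMem_erase _ _⟩
    calc (∑ M ∈ A, lam ^ M.card)
        = lam * ∑ N ∈ A.image (fun M => M.erase e), lam ^ N.card := by
          rw [h1, ← h2]
      _ ≤ lam * ∑ M ∈ B, lam ^ M.card := by
          refine mul_le_mul_of_nonneg_left ?_ hlam
          exact Finset.sum_le_sum_of_subset_of_nonneg h3
            (fun M _ _ => pow_nonneg hlam _)
  -- split Z
  have hZ : Zmatch G lam
      = (∑ M ∈ A, lam ^ M.card) + ∑ M ∈ B, lam ^ M.card := by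
    rw [Zmatch, ← Finset.sum_filter_add_sum_filter_not
      (Finset.univ.filter (fun M : Finset (Sym2 V) => IsMatchingFinset G M))
      (fun M => e ∈ M)]
    congr 1 <;> rw [Finset.filter_filter] <;> rfl
  have hpos : (0:ℝ) < 1 + lam := by linarith
  rw [hZ, div_mul_eq_mul_div, le_div_iff₀ hpos]
  nlinarith [key, hAnonneg, hBnonneg]
end

section
/- For all integers q ≥ 3, d ≥ 1, every integer n divisible by 2d, and every integer k ≥ 1, one has k·q^{2d}·c^q_k(H_{d,n}) ≥ (n/(2d) − k)·c^q_{k−1}(H_{d,n}). -/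
open Finset
open scoped Classical

variable {V : Type} [Fintype V] [DecidableEq V]

namespace Aux15

abbrev HV (d m : ℕ) : Type := Fin m × (Fin d ⊕ Fin d)

variable {q d m : ℕ}

/-- Number of monochromatic edges lying in copy `i`. -/
noncomputable def locMono (q : ℕ) {d m : ℕ} (i : Fin m) (χ : HV d m → Fin q) : ℕ :=
  (Finset.univ.filter fun e : Sym2 (HV d m) =>
    (e ∈ (Hgraph d m).edgeSet ∧ ∀ v ∈ e, ∀ w ∈ e, χ v = χ w) ∧ ∀ v ∈ e, v.1 = i).card

lemma hgraph_adj {u v : HV d m} : (Hgraph d m).Adj u v ↔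
    u.1 = v.1 ∧ ((u.2.isLeft ∧ v.2.isRight) ∨ (u.2.isRight ∧ v.2.isLeft)) := Iff.rfl

lemma edge_char {e : Sym2 (HV d m)} {i : Fin m} :
    (e ∈ (Hgraph d m).edgeSet ∧ ∀ v ∈ e, v.1 = i) ↔
      ∃ a b : Fin d, e = s((i, Sum.inl a), (i, Sum.inr b)) := by
  constructor
  · rintro ⟨he, hc⟩
    induction e using Sym2.ind with
    | _ u v =>
      rw [SimpleGraph.mem_edgeSet, hgraph_adj] at he
      have hu : u.1 = i := hc u (by simp)
      have hv : v.1 = i := hc v (by simp)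
      obtain ⟨_, h2⟩ := he
      rcases h2 with ⟨hl, hr⟩ | ⟨hl, hr⟩
      · obtain ⟨a, ha⟩ := Sum.isLeft_iff.mp hl
        obtain ⟨b, hb⟩ := Sum.isRight_iff.mp hr
        refine ⟨a, b, ?_⟩
        have hu' : u = (i, Sum.inl a) := Prod.ext hu ha
        have hv' : v = (i, Sum.inr b) := Prod.ext hv hb
        rw [hu', hv']
      · obtain ⟨a, ha⟩ := Sum.isLeft_iff.mp hr
        obtain ⟨b, hb⟩ := Sum.isRight_iff.mp hl
        refine ⟨a, b, ?_⟩
        have hu' : u = (i, Sum.inr b) := Prod.ext hu hb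
        have hv' : v = (i, Sum.inl a) := Prod.ext hv ha
        rw [hu', hv', Sym2.eq_swap]
  · rintro ⟨a, b, rfl⟩
    refine ⟨?_, ?_⟩
    · rw [SimpleGraph.mem_edgeSet, hgraph_adj]
      exact ⟨rfl, Or.inl ⟨rfl, rfl⟩⟩
    · intro v hv
      rcases Sym2.mem_iff.mp hv with rfl | rfl <;> rfl

lemma mono_pair {α β : Type*} {χ : α → β} {u v : α} :
    (∀ x ∈ s(u,v), ∀ y ∈ s(u,v), χ x = χ y) ↔ χ u = χ v := by
  constructor
  · intro h; exact h u (by simp) v (by simp)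
  · intro h x hx y hy
    rcases Sym2.mem_iff.mp hx with rfl | rfl <;>
      rcases Sym2.mem_iff.mp hy with rfl | rfl <;>
      first | rfl | exact h | exact h.symm

lemma monoCount_eq_sum (χ : HV d m → Fin q) :
    monoCount (Hgraph d m) χ = ∑ i : Fin m, locMono q i χ := by
  classical
  unfold monoCount locMono
  have hset : (Finset.univ.filter fun e : Sym2 (HV d m) =>
      e ∈ (Hgraph d m).edgeSet ∧ ∀ v ∈ e, ∀ w ∈ e, χ v = χ w)
      = Finset.univ.biUnion (fun i : Fin m =>
        Finset.univ.filter fun e : Sym2 (HV d m) =>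
          (e ∈ (Hgraph d m).edgeSet ∧ ∀ v ∈ e, ∀ w ∈ e, χ v = χ w) ∧ ∀ v ∈ e, v.1 = i) := by
    ext e
    simp only [Finset.mem_filter, Finset.mem_biUnion, Finset.mem_univ, true_and]
    constructor
    · rintro ⟨he, hm⟩
      induction e using Sym2.ind with
      | _ u v =>
        rw [SimpleGraph.mem_edgeSet, hgraph_adj] at he
        refine ⟨u.1, ⟨by rw [SimpleGraph.mem_edgeSet, hgraph_adj]; exact he, hm⟩, ?_⟩
        intro w hw
        rcases Sym2.mem_iff.mp hw with rfl | rfl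
        · rfl
        · exact he.1.symm
    · rintro ⟨i, h, _⟩; exact h
  rw [hset, Finset.card_biUnion]
  intro i _ j _ hij
  rw [Function.onFun, Finset.disjoint_left]
  intro e he hej
  simp only [Finset.mem_filter, Finset.mem_univ, true_and] at he hej
  obtain ⟨⟨_, _⟩, hi⟩ := he
  obtain ⟨_, hj⟩ := hej
  induction e using Sym2.ind with
  | _ u v =>
    exact hij ((hi u (by simp)).symm.trans (hj u (by simp)))

lemma locMono_congr {i : Fin m} {χ χ' : HV d m → Fin q}
    (h : ∀ v : HV d m, v.1 = i → χ v = χ' v) : locMono q i χ = locMono q i χ' := by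
  unfold locMono
  congr 1
  apply Finset.filter_congr
  intro e _
  constructor
  · rintro ⟨⟨he, hm⟩, hc⟩
    refine ⟨⟨he, fun v hv w hw => ?_⟩, hc⟩
    rw [← h v (hc v hv), ← h w (hc w hw)]
    exact hm v hv w hw
  · rintro ⟨⟨he, hm⟩, hc⟩
    refine ⟨⟨he, fun v hv w hw => ?_⟩, hc⟩
    rw [h v (hc v hv), h w (hc w hw)]
    exact hm v hv w hw

/-- A fixed coloring of one copy of `K_{d,d}` with exactly one monochromatic edge. -/
def sig (q d : ℕ) (hq : 3 ≤ q) : (Fin d ⊕ Fin d) → Fin q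
  | Sum.inl a => if (a : ℕ) = 0 then ⟨0, by omega⟩ else ⟨1, by omega⟩
  | Sum.inr b => if (b : ℕ) = 0 then ⟨0, by omega⟩ else ⟨2, by omega⟩

noncomputable def upd (hq : 3 ≤ q) (χ : HV d m → Fin q) (i : Fin m) : HV d m → Fin q :=
  fun v => if v.1 = i then sig q d hq v.2 else χ v

lemma sig_eq_iff (hq : 3 ≤ q) {a b : Fin d} :
    sig q d hq (Sum.inl a) = sig q d hq (Sum.inr b) ↔ (a : ℕ) = 0 ∧ (b : ℕ) = 0 := by
  unfold sig
  by_cases ha : (a : ℕ) = 0 <;> by_cases hb : (b : ℕ) = 0 <;>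
    simp [ha, hb, Fin.ext_iff]

lemma locMono_upd (hq : 3 ≤ q) (hd : 1 ≤ d) (χ : HV d m → Fin q) (i : Fin m) :
    locMono q i (upd hq χ i) = 1 := by
  unfold locMono
  have hset : (Finset.univ.filter fun e : Sym2 (HV d m) =>
      (e ∈ (Hgraph d m).edgeSet ∧ ∀ v ∈ e, ∀ w ∈ e, upd hq χ i v = upd hq χ i w) ∧
        ∀ v ∈ e, v.1 = i)
      = {s((i, Sum.inl (⟨0, hd⟩ : Fin d)), (i, Sum.inr (⟨0, hd⟩ : Fin d)))} := by
    ext e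
    simp only [Finset.mem_filter, Finset.mem_univ, true_and, Finset.mem_singleton]
    constructor
    · rintro ⟨⟨he, hm⟩, hc⟩
      obtain ⟨a, b, rfl⟩ := edge_char.mp ⟨he, hc⟩
      have hab : upd hq χ i (i, Sum.inl a) = upd hq χ i (i, Sum.inr b) := mono_pair.mp hm
      unfold upd at hab
      simp only [if_pos rfl] at hab
      obtain ⟨ha, hb⟩ := (sig_eq_iff hq).mp hab
      have ha' : a = ⟨0, hd⟩ := Fin.ext ha
      have hb' : b = ⟨0, hd⟩ := Fin.ext hb
      rw [ha', hb']
    · rintro rfl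
      refine ⟨⟨?_, ?_⟩, ?_⟩
      · rw [SimpleGraph.mem_edgeSet, hgraph_adj]
        exact ⟨rfl, Or.inl ⟨rfl, rfl⟩⟩
      · apply mono_pair.mpr
        show upd hq χ i (i, Sum.inl ⟨0, hd⟩) = upd hq χ i (i, Sum.inr ⟨0, hd⟩)
        unfold upd
        simp only [if_pos rfl]
        exact (sig_eq_iff hq (a := ⟨0, hd⟩) (b := ⟨0, hd⟩)).mpr ⟨rfl, rfl⟩
      · intro v hv
        rcases Sym2.mem_iff.mp hv with rfl | rfl <;> rfl
  rw [hset, Finset.card_singleton]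

lemma monoCount_upd (hq : 3 ≤ q) (hd : 1 ≤ d) {χ : HV d m → Fin q} {i : Fin m}
    (h0 : locMono q i χ = 0) :
    monoCount (Hgraph d m) (upd hq χ i) = monoCount (Hgraph d m) χ + 1 := by
  classical
  rw [monoCount_eq_sum, monoCount_eq_sum]
  rw [← Finset.add_sum_erase Finset.univ _ (Finset.mem_univ i),
      ← Finset.add_sum_erase Finset.univ (fun j => locMono q j χ) (Finset.mem_univ i)]
  rw [locMono_upd hq hd, h0]
  have hrest : ∑ j ∈ Finset.univ.erase i, locMono q j (upd hq χ i)
      = ∑ j ∈ Finset.univ.erase i, locMono q j χ := by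
    apply Finset.sum_congr rfl
    intro j hj
    have hji : j ≠ i := Finset.ne_of_mem_erase hj
    apply locMono_congr
    intro v hv
    unfold upd
    rw [if_neg (by rw [hv]; exact hji)]
  rw [hrest]
  omega

lemma card_zero_ge {kk : ℕ} {χ : HV d m → Fin q}
    (hχ : monoCount (Hgraph d m) χ = kk) :
    m - kk ≤ (Finset.univ.filter fun i : Fin m => locMono q i χ = 0).card := by
  classical
  have hsum : ∑ i : Fin m, locMono q i χ = kk := by rw [← monoCount_eq_sum, hχ]
  have hcompl : (Finset.univ.filter fun i : Fin m => ¬ locMono q i χ = 0).card ≤ kk := by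
    calc (Finset.univ.filter fun i : Fin m => ¬ locMono q i χ = 0).card
        = ∑ i ∈ Finset.univ.filter (fun i : Fin m => ¬ locMono q i χ = 0), 1 := by
          simp
      _ ≤ ∑ i ∈ Finset.univ.filter (fun i : Fin m => ¬ locMono q i χ = 0), locMono q i χ := by
          apply Finset.sum_le_sum
          intro i hi
          have := (Finset.mem_filter.mp hi).2
          omega
      _ ≤ ∑ i : Fin m, locMono q i χ := by
          apply Finset.sum_le_sum_of_subset (Finset.filter_subset _ _)
      _ = kk := hsum
  have := Finset.card_filter_add_card_filter_not
    (s := (Finset.univ : Finset (Fin m))) (fun i => locMono q i χ = 0)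
  simp only [Finset.card_univ, Fintype.card_fin] at this
  omega

lemma card_one_le {kk : ℕ} {χ : HV d m → Fin q}
    (hχ : monoCount (Hgraph d m) χ = kk) :
    (Finset.univ.filter fun i : Fin m => locMono q i χ = 1).card ≤ kk := by
  classical
  have hsum : ∑ i : Fin m, locMono q i χ = kk := by rw [← monoCount_eq_sum, hχ]
  calc (Finset.univ.filter fun i : Fin m => locMono q i χ = 1).card
      = ∑ i ∈ Finset.univ.filter (fun i : Fin m => locMono q i χ = 1), 1 := by simp
    _ ≤ ∑ i ∈ Finset.univ.filter (fun i : Fin m => locMono q i χ = 1), locMono q i χ := by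
        apply Finset.sum_le_sum
        intro i hi
        have := (Finset.mem_filter.mp hi).2
        omega
    _ ≤ ∑ i : Fin m, locMono q i χ :=
        Finset.sum_le_sum_of_subset (Finset.filter_subset _ _)
    _ = kk := hsum

lemma main_nat (hq : 3 ≤ q) (hd : 1 ≤ d) (k : ℕ) (hk : 1 ≤ k) :
    (m - (k - 1)) * colCount (Hgraph d m) q (k - 1) ≤
      q ^ (2 * d) * (k * colCount (Hgraph d m) q k) := by
  classical
  set A : Finset (Σ _ : HV d m → Fin q, Fin m) :=
    (Finset.univ.filter fun χ : HV d m → Fin q =>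
        monoCount (Hgraph d m) χ = k - 1).sigma
      (fun χ => Finset.univ.filter fun i : Fin m => locMono q i χ = 0) with hA
  set B : Finset (Σ _ : HV d m → Fin q, Fin m) :=
    (Finset.univ.filter fun χ : HV d m → Fin q =>
        monoCount (Hgraph d m) χ = k).sigma
      (fun χ => Finset.univ.filter fun i : Fin m => locMono q i χ = 1) with hB
  have hlow : (m - (k - 1)) * colCount (Hgraph d m) q (k - 1) ≤ A.card := by
    rw [hA, Finset.card_sigma]
    unfold colCount
    rw [mul_comm]
    calc (Finset.univ.filter fun χ : HV d m → Fin q =>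
            monoCount (Hgraph d m) χ = k - 1).card * (m - (k - 1))
        = ∑ _χ ∈ Finset.univ.filter (fun χ : HV d m → Fin q =>
            monoCount (Hgraph d m) χ = k - 1), (m - (k - 1)) := by
          rw [Finset.sum_const, smul_eq_mul]
      _ ≤ _ := by
          apply Finset.sum_le_sum
          intro χ hχ
          exact card_zero_ge (Finset.mem_filter.mp hχ).2
  have hup : B.card ≤ k * colCount (Hgraph d m) q k := by
    rw [hB, Finset.card_sigma]
    unfold colCount
    rw [mul_comm]
    calc ∑ χ ∈ Finset.univ.filter (fun χ : HV d m → Fin q =>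
            monoCount (Hgraph d m) χ = k),
          (Finset.univ.filter fun i : Fin m => locMono q i χ = 1).card
        ≤ ∑ _χ ∈ Finset.univ.filter (fun χ : HV d m → Fin q =>
            monoCount (Hgraph d m) χ = k), k := by
          apply Finset.sum_le_sum
          intro χ hχ
          exact card_one_le (Finset.mem_filter.mp hχ).2
      _ = _ := by rw [Finset.sum_const, smul_eq_mul]
  have hmid : A.card ≤ q ^ (2 * d) * B.card := by
    apply Finset.card_le_mul_card_image_of_maps_to
      (f := fun p : Σ _ : HV d m → Fin q, Fin m => (⟨upd hq p.1 p.2, p.2⟩ : Σ _ : HV d m → Fin q, Fin m))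
    · rintro ⟨χ, i⟩ hp
      rw [hA, Finset.mem_sigma, Finset.mem_filter, Finset.mem_filter] at hp
      obtain ⟨⟨_, hχ⟩, _, hi⟩ := hp
      rw [hB, Finset.mem_sigma, Finset.mem_filter, Finset.mem_filter]
      refine ⟨⟨Finset.mem_univ _, ?_⟩, Finset.mem_univ _, ?_⟩
      · show monoCount (Hgraph d m) (upd hq χ i) = k
        rw [monoCount_upd hq hd hi, hχ]
        omega
      · exact locMono_upd hq hd χ i
    · intro b hb
      have hcard : (Finset.univ : Finset (Fin d ⊕ Fin d → Fin q)).card = q ^ (2 * d) := by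
        rw [Finset.card_univ, Fintype.card_fun]
        simp [two_mul]
      rw [← hcard]
      apply Finset.card_le_card_of_injOn
        (f := fun p : Σ _ : HV d m → Fin q, Fin m => fun x : Fin d ⊕ Fin d => p.1 (b.2, x))
      · intro _ _; exact Finset.mem_univ _
      · intro p hp p' hp' heq
        simp only [Finset.coe_filter, Set.mem_setOf_eq] at hp hp'
        obtain ⟨_, hfp⟩ := hp
        obtain ⟨_, hfp'⟩ := hp'
        have h2 : p.2 = b.2 := congrArg Sigma.snd hfp
        have h2' : p'.2 = b.2 := congrArg Sigma.snd hfp'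
        have h1 : upd hq p.1 p.2 = b.1 := congrArg Sigma.fst hfp
        have h1' : upd hq p'.1 p'.2 = b.1 := congrArg Sigma.fst hfp'
        have hfst : p.1 = p'.1 := by
          funext v
          by_cases hv : v.1 = b.2
          · have e1 : p.1 v = p.1 (b.2, v.2) := by rw [← hv]
            have e2 : p'.1 v = p'.1 (b.2, v.2) := by rw [← hv]
            rw [e1, e2]
            exact congrFun heq v.2
          · have e1 : upd hq p.1 p.2 v = p.1 v := by
              unfold upd; rw [if_neg (by rw [h2]; exact hv)]
            have e2 : upd hq p'.1 p'.2 v = p'.1 v := by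
              unfold upd; rw [if_neg (by rw [h2']; exact hv)]
            rw [← e1, ← e2, h1, h1']
        exact Sigma.ext hfst (heq_of_eq (h2.trans h2'.symm))
  calc (m - (k - 1)) * colCount (Hgraph d m) q (k - 1)
      ≤ A.card := hlow
    _ ≤ q ^ (2 * d) * B.card := hmid
    _ ≤ q ^ (2 * d) * (k * colCount (Hgraph d m) q k) :=
        Nat.mul_le_mul_left _ hup

end Aux15

/-- for `q ≥ 3`, `d ≥ 1`, `2d ∣ n` and `k ≥ 1`,
`k·q^{2d}·c^q_k(H_{d,n}) ≥ (n/(2d) - k)·c^q_{k-1}(H_{d,n})`. -/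
theorem coloring_coefficient_lower_ratio (q d : ℕ) (hq : 3 ≤ q) (hd : 1 ≤ d)
    (n : ℕ) (hn : 2 * d ∣ n) (k : ℕ) (hk : 1 ≤ k) :
    ((n : ℝ) / (2 * d) - k) * (colCount (Hgraph d (n / (2 * d))) q (k - 1) : ℝ) ≤
      (k : ℝ) * (q : ℝ) ^ (2 * d) * (colCount (Hgraph d (n / (2 * d))) q k : ℝ) := by
    classical
  set m := n / (2 * d) with hm
  have hd0 : (0:ℝ) < 2 * (d:ℝ) := by positivity
  have hnm : (n : ℝ) / (2 * (d:ℝ)) = (m : ℝ) := by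
    obtain ⟨c, hc⟩ := hn
    have hmc : m = c := by rw [hm, hc]; exact Nat.mul_div_cancel_left c (by omega)
    rw [hmc]
    field_simp
    push_cast [hc]
    ring
  rw [hnm]
  have hnat := Aux15.main_nat (m := m) hq hd k hk
  have hcast : ((m - (k - 1) : ℕ) : ℝ) * (colCount (Hgraph d m) q (k - 1) : ℝ) ≤
      (k : ℝ) * (q : ℝ) ^ (2 * d) * (colCount (Hgraph d m) q k : ℝ) := by
    have := Nat.cast_le (α := ℝ) |>.mpr hnat
    push_cast at this
    calc ((m - (k - 1) : ℕ) : ℝ) * (colCount (Hgraph d m) q (k - 1) : ℝ)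
        ≤ (q : ℝ) ^ (2 * d) * ((k : ℝ) * (colCount (Hgraph d m) q k : ℝ)) := this
      _ = (k : ℝ) * (q : ℝ) ^ (2 * d) * (colCount (Hgraph d m) q k : ℝ) := by ring
  have hle : (m : ℝ) - (k : ℝ) ≤ ((m - (k - 1) : ℕ) : ℝ) := by
    rw [sub_le_iff_le_add]
    have h : m ≤ (m - (k - 1)) + k := by omega
    exact_mod_cast h
  calc ((m : ℝ) - (k : ℝ)) * (colCount (Hgraph d m) q (k - 1) : ℝ)
      ≤ ((m - (k - 1) : ℕ) : ℝ) * (colCount (Hgraph d m) q (k - 1) : ℝ) := by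
        apply mul_le_mul_of_nonneg_right hle (Nat.cast_nonneg _)
    _ ≤ (k : ℝ) * (q : ℝ) ^ (2 * d) * (colCount (Hgraph d m) q k : ℝ) := hcast
end

section
/- Let n ≥ 0 and let a_0,…,a_n and b_0,…,b_n be nonnegative reals with a_0 = b_0 > 0, and set P(λ) = ∑_{k=0}^n a_k λ^k and Q(λ) = ∑_{k=0}^n b_k λ^k (so P(λ) > 0 and Q(λ) > 0 for all λ ≥ 0). If P′(λ)/P(λ) ≥ Q′(λ)/Q(λ) for all λ > 0, then P(λ) ≥ Q(λ) for all λ ≥ 0. -/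
open Finset

/-- OCC ⇒ PART: if `P` and `Q` are polynomials of degree at most `n` with
nonnegative coefficients, equal positive constant terms, and `P′/P ≥ Q′/Q` on `(0,∞)`,
then `P ≥ Q` on `[0,∞)`. -/
theorem occ_implies_part (n : ℕ) (a b : ℕ → ℝ)
    (ha : ∀ k ≤ n, 0 ≤ a k) (hb : ∀ k ≤ n, 0 ≤ b k)
    (hab : a 0 = b 0) (ha0 : 0 < a 0)
    (P Q : ℝ → ℝ)
    (hP : P = fun x => ∑ k ∈ Finset.range (n + 1), a k * x ^ k)
    (hQ : Q = fun x => ∑ k ∈ Finset.range (n + 1), b k * x ^ k)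
    (h : ∀ x : ℝ, 0 < x → deriv Q x / Q x ≤ deriv P x / P x) :
    ∀ x : ℝ, 0 ≤ x → Q x ≤ P x := by
  have hPdiff : Differentiable ℝ P := by
    subst hP
    exact Differentiable.fun_sum fun k _ => (differentiable_pow k).const_mul _
  have hQdiff : Differentiable ℝ Q := by
    subst hQ
    exact Differentiable.fun_sum fun k _ => (differentiable_pow k).const_mul _
  have hpos : ∀ (c : ℕ → ℝ), (∀ k ≤ n, 0 ≤ c k) → 0 < c 0 → ∀ y : ℝ, 0 ≤ y →
      0 < ∑ k ∈ Finset.range (n + 1), c k * y ^ k := by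
    intro c hc hc0 y hy
    have h0 : (0 : ℕ) ∈ Finset.range (n + 1) := by simp
    calc (0:ℝ) < c 0 * y ^ 0 := by simpa using hc0
      _ ≤ ∑ k ∈ Finset.range (n + 1), c k * y ^ k :=
        Finset.single_le_sum (fun k hk => mul_nonneg
          (hc k (Nat.lt_succ_iff.mp (Finset.mem_range.mp hk))) (pow_nonneg hy k)) h0
  have hPpos : ∀ y : ℝ, 0 ≤ y → 0 < P y := by
    intro y hy; rw [hP]; exact hpos a ha ha0 y hy
  have hQpos : ∀ y : ℝ, 0 ≤ y → 0 < Q y := by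
    intro y hy; rw [hQ]; exact hpos b hb (hab ▸ ha0) y hy
  have heval0 : ∀ c : ℕ → ℝ, (∑ k ∈ Finset.range (n + 1), c k * (0:ℝ) ^ k) = c 0 := by
    intro c
    rw [Finset.sum_eq_single 0]
    · simp
    · intro k _ hk0; simp [zero_pow hk0]
    · simp
  set f : ℝ → ℝ := fun x => P x / Q x with hf
  have hfdiff : ∀ y ∈ Set.Ici (0:ℝ), DifferentiableAt ℝ f y := by
    intro y hy
    exact (hPdiff y).div (hQdiff y) (ne_of_gt (hQpos y hy))
  have hmono : MonotoneOn f (Set.Ici (0:ℝ)) := by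
    apply monotoneOn_of_deriv_nonneg (convex_Ici 0)
    · exact fun y hy => ((hfdiff y hy).continuousAt.continuousWithinAt)
    · intro y hy
      rw [interior_Ici] at hy
      exact (hfdiff y (Set.mem_Ici.mpr (le_of_lt hy))).differentiableWithinAt
    · intro y hy
      rw [interior_Ici] at hy
      have hQy : 0 < Q y := hQpos y (le_of_lt hy)
      have hPy : 0 < P y := hPpos y (le_of_lt hy)
      rw [hf, deriv_fun_div (hPdiff y) (hQdiff y) (ne_of_gt hQy)]
      apply div_nonneg _ (sq_nonneg _)
      rw [sub_nonneg]
      have := h y hy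
      rw [div_le_div_iff₀ hQy hPy] at this
      linarith [this]
  intro x hx
  have h01 : f 0 ≤ f x := hmono (Set.self_mem_Ici) hx hx
  have hf0 : f 0 = 1 := by
    rw [hf]
    simp only [hP, hQ]
    rw [heval0 a, heval0 b, hab, div_self (ne_of_gt (hab ▸ ha0))]
  rw [hf0, hf] at h01
  exact (one_le_div (hQpos x hx)).mp h01
end

section
/- Let n ≥ 1 and let a_0,…,a_n and b_0,…,b_n be strictly positive reals with a_0 = b_0, and set P(λ) = ∑_{k=0}^n a_k λ^k and Q(λ) = ∑_{k=0}^n b_k λ^k. If a_{k+1}/a_k ≥ b_{k+1}/b_k for every 0 ≤ k ≤ n−1, then P′(λ)·Q(λ) − Q′(λ)·P(λ) ≥ 0 for all λ ≥ 0; equivalently, λP′(λ)/P(λ) ≥ λQ′(λ)/Q(λ) for all λ > 0. (In fact every coefficient of the polynomial P′Q − Q′P is nonnegative.) -/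
open Finset

/-- FV ⇒ OCC: if `P` and `Q` are polynomials of degree at most `n` with
strictly positive coefficients, equal constant terms, and `a_{k+1}/a_k ≥ b_{k+1}/b_k` for
all `0 ≤ k ≤ n-1`, then `P′Q - Q′P ≥ 0` on `[0,∞)`; equivalently
`λP′(λ)/P(λ) ≥ λQ′(λ)/Q(λ)` for all `λ > 0`. -/
theorem fv_implies_occ (n : ℕ) (hn : 1 ≤ n) (a b : ℕ → ℝ)
    (ha : ∀ k ≤ n, 0 < a k) (hb : ∀ k ≤ n, 0 < b k)
    (hab : a 0 = b 0)
    (hfv : ∀ k < n, b (k + 1) / b k ≤ a (k + 1) / a k)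
    (P Q : ℝ → ℝ)
    (hP : P = fun x => ∑ k ∈ Finset.range (n + 1), a k * x ^ k)
    (hQ : Q = fun x => ∑ k ∈ Finset.range (n + 1), b k * x ^ k) :
    (∀ x : ℝ, 0 ≤ x → 0 ≤ deriv P x * Q x - deriv Q x * P x) ∧
      ∀ x : ℝ, 0 < x → x * deriv Q x / Q x ≤ x * deriv P x / P x := by
  -- step inequality
  have hstep : ∀ k < n, a k * b (k + 1) ≤ a (k + 1) * b k := by
    intro k hk
    have h := hfv k hk
    have hak := ha k hk.le
    have hbk := hb k hk.le
    rw [div_le_div_iff₀ hbk hak] at h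
    linarith
  -- monotonicity of a_k / b_k : for j ≤ i ≤ n, a j * b i ≤ a i * b j
  have hkey : ∀ i ≤ n, ∀ j ≤ i, a j * b i ≤ a i * b j := by
    intro i hi
    induction i with
    | zero => intro j hj; interval_cases j; exact le_refl _
    | succ m ih =>
      intro j hj
      rcases Nat.lt_succ_iff_lt_or_eq.mp (Nat.lt_succ_of_le hj) with hj' | hj'
      · have hjm : j ≤ m := Nat.lt_succ_iff.mp hj'
        have h1 : a j * b m ≤ a m * b j := ih (le_trans (Nat.le_succ m) hi) j hjm
        have h2 : a m * b (m + 1) ≤ a (m + 1) * b m :=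
          hstep m (Nat.lt_of_succ_le hi)
        have hbm := hb m (le_trans (Nat.le_succ m) hi)
        have hbj := hb j (le_trans hj hi)
        have hbm1 := hb (m + 1) hi
        have key : a j * b (m + 1) * b m ≤ a (m + 1) * b j * b m := by nlinarith
        exact le_of_mul_le_mul_right key hbm
      · subst hj'; exact le_of_eq rfl
  -- derivatives
  have hP' : ∀ x : ℝ, deriv P x = ∑ k ∈ Finset.range (n + 1), a k * (k * x ^ (k - 1)) := by
    intro x
    rw [hP]
    have h : HasDerivAt (fun x : ℝ => ∑ k ∈ Finset.range (n + 1), a k * x ^ k)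
        (∑ k ∈ Finset.range (n + 1), a k * (k * x ^ (k - 1))) x := by
      apply HasDerivAt.fun_sum
      intro k _
      simpa using (hasDerivAt_pow k x).const_mul (a k)
    exact h.deriv
  have hQ' : ∀ x : ℝ, deriv Q x = ∑ k ∈ Finset.range (n + 1), b k * (k * x ^ (k - 1)) := by
    intro x
    rw [hQ]
    have h : HasDerivAt (fun x : ℝ => ∑ k ∈ Finset.range (n + 1), b k * x ^ k)
        (∑ k ∈ Finset.range (n + 1), b k * (k * x ^ (k - 1))) x := by
      apply HasDerivAt.fun_sum
      intro k _
      simpa using (hasDerivAt_pow k x).const_mul (b k)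
    exact h.deriv
  -- x * deriv
  have hxP : ∀ x : ℝ, x * deriv P x = ∑ k ∈ Finset.range (n + 1), (k : ℝ) * a k * x ^ k := by
    intro x
    rw [hP' x, Finset.mul_sum]
    refine Finset.sum_congr rfl fun k _ => ?_
    cases k with
    | zero => simp
    | succ m => simp [pow_succ]; ring
  have hxQ : ∀ x : ℝ, x * deriv Q x = ∑ k ∈ Finset.range (n + 1), (k : ℝ) * b k * x ^ k := by
    intro x
    rw [hQ' x, Finset.mul_sum]
    refine Finset.sum_congr rfl fun k _ => ?_
    cases k with
    | zero => simp
    | succ m => simp [pow_succ]; ring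
  -- the main nonnegativity
  have hD : ∀ x : ℝ, 0 ≤ x →
      0 ≤ (∑ k ∈ Finset.range (n + 1), (k : ℝ) * a k * x ^ k) *
            (∑ k ∈ Finset.range (n + 1), b k * x ^ k) -
          (∑ k ∈ Finset.range (n + 1), (k : ℝ) * b k * x ^ k) *
            (∑ k ∈ Finset.range (n + 1), a k * x ^ k) := by
    intro x hx
    set f : ℕ → ℕ → ℝ := fun i j => ((i : ℝ) - (j : ℝ)) * (a i * b j) * x ^ (i + j) with hf
    have hexp :
        (∑ k ∈ Finset.range (n + 1), (k : ℝ) * a k * x ^ k) *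
            (∑ k ∈ Finset.range (n + 1), b k * x ^ k) -
          (∑ k ∈ Finset.range (n + 1), (k : ℝ) * b k * x ^ k) *
            (∑ k ∈ Finset.range (n + 1), a k * x ^ k) =
          ∑ i ∈ Finset.range (n + 1), ∑ j ∈ Finset.range (n + 1), f i j := by
      rw [Finset.sum_mul_sum, Finset.sum_mul_sum]
      rw [Finset.sum_comm (s := Finset.range (n + 1)) (t := Finset.range (n + 1))
        (f := fun i j => (i : ℝ) * b i * x ^ i * (a j * x ^ j))]
      rw [← Finset.sum_sub_distrib]
      refine Finset.sum_congr rfl fun i _ => ?_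
      rw [← Finset.sum_sub_distrib]
      refine Finset.sum_congr rfl fun j _ => ?_
      rw [hf]
      simp only [pow_add]
      ring
    rw [hexp]
    have h2 : 0 ≤ 2 * ∑ i ∈ Finset.range (n + 1), ∑ j ∈ Finset.range (n + 1), f i j := by
      have hsym : (2 : ℝ) * ∑ i ∈ Finset.range (n + 1), ∑ j ∈ Finset.range (n + 1), f i j =
          ∑ i ∈ Finset.range (n + 1), ∑ j ∈ Finset.range (n + 1), (f i j + f j i) := by
        rw [two_mul]
        nth_rewrite 2 [Finset.sum_comm]
        rw [← Finset.sum_add_distrib]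
        exact Finset.sum_congr rfl fun i _ => (Finset.sum_add_distrib).symm
      rw [hsym]
      refine Finset.sum_nonneg fun i hi => Finset.sum_nonneg fun j hj => ?_
      have hi' := Nat.lt_succ_iff.mp (Finset.mem_range.mp hi)
      have hj' := Nat.lt_succ_iff.mp (Finset.mem_range.mp hj)
      have hterm : f i j + f j i =
          ((i : ℝ) - (j : ℝ)) * (a i * b j - a j * b i) * x ^ (i + j) := by
        rw [hf]; simp only [Nat.add_comm j i]; ring
      rw [hterm]
      have hxp : 0 ≤ x ^ (i + j) := pow_nonneg hx _
      rcases le_total j i with hji | hij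
      · have h1 : a j * b i ≤ a i * b j := hkey i hi' j hji
        have h2 : (0 : ℝ) ≤ (i : ℝ) - (j : ℝ) := by
          have := Nat.cast_le (α := ℝ).mpr hji; linarith
        exact mul_nonneg (mul_nonneg h2 (by linarith)) hxp
      · have h1 : a i * b j ≤ a j * b i := hkey j hj' i hij
        have h2 : ((i : ℝ) - (j : ℝ)) ≤ 0 := by
          have := Nat.cast_le (α := ℝ).mpr hij; linarith
        nlinarith [mul_nonneg (mul_nonneg (by linarith : (0:ℝ) ≤ (j : ℝ) - (i : ℝ))
          (by linarith : (0:ℝ) ≤ a j * b i - a i * b j)) hxp]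
    linarith
  -- positivity of P, Q on x > 0
  have hPpos : ∀ x : ℝ, 0 < x → 0 < P x := by
    intro x hx
    rw [hP]
    refine Finset.sum_pos (fun k hk => ?_) ⟨0, Finset.mem_range.mpr (Nat.succ_pos n)⟩
    exact mul_pos (ha k (Nat.lt_succ_iff.mp (Finset.mem_range.mp hk))) (pow_pos hx k)
  have hQpos : ∀ x : ℝ, 0 < x → 0 < Q x := by
    intro x hx
    rw [hQ]
    refine Finset.sum_pos (fun k hk => ?_) ⟨0, Finset.mem_range.mpr (Nat.succ_pos n)⟩
    exact mul_pos (hb k (Nat.lt_succ_iff.mp (Finset.mem_range.mp hk))) (pow_pos hx k)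
  -- combine
  have hD' : ∀ x : ℝ, 0 ≤ x →
      0 ≤ (x * deriv P x) * Q x - (x * deriv Q x) * P x := by
    intro x hx
    rw [hxP x, hxQ x, hP, hQ]
    exact hD x hx
  constructor
  · intro x hx
    rcases eq_or_lt_of_le hx with h0 | h0
    · -- x = 0
      subst h0
      have hP0 : P 0 = a 0 := by
        rw [hP]
        simp only
        rw [Finset.sum_eq_single 0]
        · simp
        · intro k hk hk0
          rcases Nat.exists_eq_succ_of_ne_zero hk0 with ⟨m, rfl⟩
          simp [pow_succ]
        · intro h; exact absurd (Finset.mem_range.mpr (Nat.succ_pos n)) h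
      have hQ0 : Q 0 = b 0 := by
        rw [hQ]
        simp only
        rw [Finset.sum_eq_single 0]
        · simp
        · intro k hk hk0
          rcases Nat.exists_eq_succ_of_ne_zero hk0 with ⟨m, rfl⟩
          simp [pow_succ]
        · intro h; exact absurd (Finset.mem_range.mpr (Nat.succ_pos n)) h
      have hP'0 : deriv P 0 = a 1 := by
        rw [hP' 0]
        rw [Finset.sum_eq_single 1]
        · norm_num
        · intro k hk hk1
          match k, hk1 with
          | 0, _ => simp
          | (m+2), _ => simp [pow_succ]
        · intro h; exact absurd (Finset.mem_range.mpr (Nat.lt_succ_of_le hn)) h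
      have hQ'0 : deriv Q 0 = b 1 := by
        rw [hQ' 0]
        rw [Finset.sum_eq_single 1]
        · norm_num
        · intro k hk hk1
          match k, hk1 with
          | 0, _ => simp
          | (m+2), _ => simp [pow_succ]
        · intro h; exact absurd (Finset.mem_range.mpr (Nat.lt_succ_of_le hn)) h
      rw [hP0, hQ0, hP'0, hQ'0]
      have := hkey 1 hn 0 (Nat.zero_le 1)
      linarith
    · -- x > 0
      have h := hD' x hx
      have hx' : 0 < x := h0
      nlinarith
  · intro x hx
    rw [div_le_div_iff₀ (hQpos x hx) (hPpos x hx)]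
    have h := hD' x hx.le
    linarith
end
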